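/- arXiv:2110.10663 — 4 statements merged into one kernel-verified Lean document; each statement's English description precedes it below -/
import Mathlib

section
/- Let 𝒯 be a triangulated category, ℐ a full subcategory of 𝒯, and n ≥ 1 a natural number. Then ⟨ℐ⟩_n = ([ℐ]_n)_sd; that is, the n-th thick building-block subcategory of ℐ coincides with the closure under summands of the n-th additive building-block subcategory of ℐ. -/
open CategoryTheory Category Limits Pretriangulated

universe v u

namespace RouquierDim

variable {C : Type u} [Category.{v} C] [Preadditive C] [HasZeroObject C]
  [HasShift C ℤ] [∀ n : ℤ, (shiftFunctor C n).Additive] [Pretriangulated C]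
  [HasBinaryBiproducts C]

/-- `Z` is a summand of `K`: there are maps `r : Z ⟶ K`, `k : K ⟶ Z` with `r ≫ k = 𝟙 Z`. -/
def IsSummand (Z K : C) : Prop := ∃ (r : Z ⟶ K) (k : K ⟶ Z), r ≫ k = 𝟙 Z

/-- The subcategory `ℐ * 𝒥`: objects `K` admitting a distinguished triangle
`K₀ ⟶ K ⟶ K₁ ⟶ K₀⟦1⟧` with `K₀ ∈ ℐ` and `K₁ ∈ 𝒥`. -/
def star (I J : Set C) : Set C :=
  {K | ∃ (K₀ K₁ : C) (f : K₀ ⟶ K) (g : K ⟶ K₁) (h : K₁ ⟶ K₀⟦(1 : ℤ)⟧),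
    Triangle.mk f g h ∈ (distTriang C) ∧ K₀ ∈ I ∧ K₁ ∈ J}

/-- Membership in `[ℐ]`, the smallest strictly full subcategory containing `ℐ` and
closed under finite direct sums and shifts. -/
inductive bracketMem (I : Set C) : C → Prop
  | of {X : C} (hX : X ∈ I) : bracketMem I X
  | zero {X : C} (hX : IsZero X) : bracketMem I X
  | shift {X : C} (n : ℤ) (hX : bracketMem I X) : bracketMem I (X⟦n⟧)
  | sum {X Y : C} (hX : bracketMem I X) (hY : bracketMem I Y) : bracketMem I (X ⊞ Y)
  | iso {X Y : C} (e : X ≅ Y) (hX : bracketMem I X) : bracketMem I Y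

/-- `[ℐ]` as a set of objects. -/
def bracket (I : Set C) : Set C := {X | bracketMem I X}

/-- Membership in `⟨ℐ⟩`, the smallest strictly full subcategory containing `ℐ` and
closed under finite direct sums, shifts, and summands. -/
inductive angleMem (I : Set C) : C → Prop
  | of {X : C} (hX : X ∈ I) : angleMem I X
  | zero {X : C} (hX : IsZero X) : angleMem I X
  | shift {X : C} (n : ℤ) (hX : angleMem I X) : angleMem I (X⟦n⟧)
  | sum {X Y : C} (hX : angleMem I X) (hY : angleMem I Y) : angleMem I (X ⊞ Y)
  | smd {X Y : C} (h : IsSummand X Y) (hY : angleMem I Y) : angleMem I X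
  | iso {X Y : C} (e : X ≅ Y) (hX : angleMem I X) : angleMem I Y

/-- `⟨ℐ⟩` as a set of objects. -/
def angle (I : Set C) : Set C := {X | angleMem I X}

/-- `ℐ_sd`: the smallest strictly full subcategory containing all summands of objects of `ℐ`. -/
def sd (I : Set C) : Set C := {Z | ∃ K ∈ I, IsSummand Z K}

/-- `[ℐ]_n` for `n ≥ 1`: `[ℐ]_1 = [ℐ]`, `[ℐ]_{n+1} = [ℐ]_n * [ℐ]`. (Value `∅` at `n = 0`.) -/
def bracketN (I : Set C) : ℕ → Set C
  | 0 => ∅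
  | 1 => bracket I
  | (n + 2) => star (bracketN I (n + 1)) (bracket I)

/-- `⟨ℐ⟩_n` for `n ≥ 1`: `⟨ℐ⟩_1 = ⟨ℐ⟩`, `⟨ℐ⟩_{n+1} = ⟨⟨ℐ⟩_n * ⟨ℐ⟩⟩`. (Value `∅` at `n = 0`.) -/
def angleN (I : Set C) : ℕ → Set C
  | 0 => ∅
  | 1 => angle I
  | (n + 2) => angle (star (angleN I (n + 1)) (angle I))

section Aux

set_option linter.unusedSectionVars false
open ZeroObject

variable (I : Set C)

/-! ### Basic facts about summands -/

lemma isSummand_refl (X : C) : IsSummand X X := ⟨𝟙 X, 𝟙 X, by simp⟩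

lemma isSummand_trans {X Y Z : C} (h₁ : IsSummand X Y) (h₂ : IsSummand Y Z) :
    IsSummand X Z := by
  obtain ⟨r, k, hrk⟩ := h₁
  obtain ⟨r', k', hrk'⟩ := h₂
  exact ⟨r ≫ r', k' ≫ k, by
    rw [Category.assoc, ← Category.assoc r' k' k, hrk']
    simpa using hrk⟩

lemma isSummand_of_iso {X Y : C} (e : X ≅ Y) : IsSummand X Y :=
  ⟨e.hom, e.inv, e.hom_inv_id⟩

lemma isSummand_shift {X K : C} (h : IsSummand X K) (n : ℤ) :
    IsSummand (X⟦n⟧) (K⟦n⟧) := by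
  obtain ⟨r, k, hrk⟩ := h
  exact ⟨r⟦n⟧', k⟦n⟧', by rw [← Functor.map_comp, hrk, CategoryTheory.Functor.map_id]⟩

lemma isSummand_biprod {X K Y L : C} (h₁ : IsSummand X K) (h₂ : IsSummand Y L) :
    IsSummand (X ⊞ Y) (K ⊞ L) := by
  obtain ⟨r, k, hrk⟩ := h₁
  obtain ⟨r', k', hrk'⟩ := h₂
  refine ⟨biprod.map r r', biprod.map k k', ?_⟩
  ext <;> simp [hrk, hrk']

lemma isSummand_biprod_left (X Y : C) : IsSummand X (X ⊞ Y) :=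
  ⟨biprod.inl, biprod.fst, by simp⟩

lemma isSummand_zero {X : C} (hX : IsZero X) (K : C) : IsSummand X K :=
  ⟨0, 0, by rw [comp_zero]; exact (hX.eq_of_src _ _).symm⟩

/-! ### Basic facts about `sd` -/

lemma subset_sd (S : Set C) : S ⊆ sd S := fun X hX => ⟨X, hX, isSummand_refl X⟩

lemma sd_mono {S T : Set C} (h : S ⊆ T) : sd S ⊆ sd T := by
  rintro Z ⟨K, hK, hZK⟩
  exact ⟨K, h hK, hZK⟩

lemma sd_sd (S : Set C) : sd (sd S) ⊆ sd S := by
  rintro Z ⟨K, ⟨L, hL, hKL⟩, hZK⟩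
  exact ⟨L, hL, isSummand_trans hZK hKL⟩

/-! ### Transport of distinguished triangles along isomorphisms -/

lemma dist_transport {T : Triangle C} (hT : T ∈ distTriang C) {X Y Z : C}
    (e₁ : X ≅ T.obj₁) (e₂ : Y ≅ T.obj₂) (e₃ : Z ≅ T.obj₃)
    (f : X ⟶ Y) (g : Y ⟶ Z)
    (comm₁ : f ≫ e₂.hom = e₁.hom ≫ T.mor₁)
    (comm₂ : g ≫ e₃.hom = e₂.hom ≫ T.mor₂) :
    Triangle.mk f g (e₃.hom ≫ T.mor₃ ≫ e₁.inv⟦(1 : ℤ)⟧') ∈ distTriang C := by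
  refine isomorphic_distinguished _ hT _ (Triangle.isoMk _ _ e₁ e₂ e₃ comm₁ comm₂ ?_)
  change (e₃.hom ≫ T.mor₃ ≫ e₁.inv⟦(1 : ℤ)⟧') ≫ e₁.hom⟦(1 : ℤ)⟧' = e₃.hom ≫ T.mor₃
  rw [Category.assoc, Category.assoc, ← Functor.map_comp, e₁.inv_hom_id,
    CategoryTheory.Functor.map_id, comp_id]

/-! ### Direct sums of distinguished triangles -/

/-- The binary biproduct is a product indexed by `Bool`. -/
noncomputable def biprodPiIso (F : Bool → C) [HasProduct F] :
    (F true) ⊞ (F false) ≅ ∏ᶜ F where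
  hom := Pi.lift (fun b => match b with
    | true => biprod.fst
    | false => biprod.snd)
  inv := biprod.lift (Pi.π F true) (Pi.π F false)
  hom_inv_id := by ext <;> simp
  inv_hom_id := by
    refine Pi.hom_ext _ _ fun b => ?_
    cases b <;> simp

lemma sum_triangle_distinguished {X₀ X X₁ Y₀ Y Y₁ : C}
    {f : X₀ ⟶ X} {g : X ⟶ X₁} {h : X₁ ⟶ X₀⟦(1 : ℤ)⟧}
    {f' : Y₀ ⟶ Y} {g' : Y ⟶ Y₁} {h' : Y₁ ⟶ Y₀⟦(1 : ℤ)⟧}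
    (hT : Triangle.mk f g h ∈ distTriang C)
    (hT' : Triangle.mk f' g' h' ∈ distTriang C) :
    ∃ h'' : (X₁ ⊞ Y₁) ⟶ (X₀ ⊞ Y₀)⟦(1 : ℤ)⟧,
      Triangle.mk (biprod.map f f') (biprod.map g g') h'' ∈ distTriang C := by
  have : HasFiniteProducts C := hasFiniteProducts_of_has_binary_and_terminal
  set Tfam : Bool → Triangle C := fun b => match b with
    | true => Triangle.mk f g h
    | false => Triangle.mk f' g' h' with hTfam
  have hdist : ∀ b, Tfam b ∈ distTriang C := by
    rintro (_ | _)
    · exact hT'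
    · exact hT
  have hP := productTriangle_distinguished Tfam hdist
  let e₁ : X₀ ⊞ Y₀ ≅ (productTriangle Tfam).obj₁ := biprodPiIso (fun b => (Tfam b).obj₁)
  let e₂ : X ⊞ Y ≅ (productTriangle Tfam).obj₂ := biprodPiIso (fun b => (Tfam b).obj₂)
  let e₃ : X₁ ⊞ Y₁ ≅ (productTriangle Tfam).obj₃ := biprodPiIso (fun b => (Tfam b).obj₃)
  refine ⟨e₃.hom ≫ (productTriangle Tfam).mor₃ ≫ e₁.inv⟦(1 : ℤ)⟧', ?_⟩
  refine dist_transport hP e₁ e₂ e₃ _ _ ?_ ?_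
  · refine Pi.hom_ext _ _ fun b => ?_
    cases b
    · simp [e₁, e₂, biprodPiIso, Tfam]
      erw [Category.assoc, Category.assoc, Pi.lift_π, Pi.map_π, ← Category.assoc, Pi.lift_π]
      exact biprod.map_snd _ _
    · simp [e₁, e₂, biprodPiIso, Tfam]
      erw [Category.assoc, Category.assoc, Pi.lift_π, Pi.map_π, ← Category.assoc, Pi.lift_π]
      exact biprod.map_fst _ _
  · refine Pi.hom_ext _ _ fun b => ?_
    cases b
    · simp [e₂, e₃, biprodPiIso, Tfam]
      erw [Category.assoc, Category.assoc, Pi.lift_π, Pi.map_π, ← Category.assoc, Pi.lift_π]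
      exact biprod.map_snd _ _
    · simp [e₂, e₃, biprodPiIso, Tfam]
      erw [Category.assoc, Category.assoc, Pi.lift_π, Pi.map_π, ← Category.assoc, Pi.lift_π]
      exact biprod.map_fst _ _

/-! ### Splitting of summands -/

lemma exists_biprod_iso_of_isSummand {X K : C} (h : IsSummand X K) :
    ∃ (c : C), Nonempty (K ≅ X ⊞ c) := by
  obtain ⟨r, k, hrk⟩ := h
  obtain ⟨c, g, m, hc⟩ := distinguished_cocone_triangle r
  have hm : m = 0 := by
    have h31 := comp_distTriang_mor_zero₃₁ _ hc
    change m ≫ r⟦(1 : ℤ)⟧' = 0 at h31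
    calc m = m ≫ (r ≫ k)⟦(1 : ℤ)⟧' := by
            rw [hrk, CategoryTheory.Functor.map_id, comp_id]
    _ = (m ≫ r⟦(1 : ℤ)⟧') ≫ k⟦(1 : ℤ)⟧' := by rw [Functor.map_comp, Category.assoc]
    _ = 0 := by rw [h31, zero_comp]
  let φ : Triangle.mk r g m ⟶ binaryBiproductTriangle X c :=
    { hom₁ := 𝟙 X
      hom₂ := biprod.lift k g
      hom₃ := 𝟙 c
      comm₁ := by
        have h12 : r ≫ g = 0 := comp_distTriang_mor_zero₁₂ _ hc
        change r ≫ biprod.lift k g = 𝟙 X ≫ biprod.inl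
        ext
        · simp [hrk]
        · simp [h12]
      comm₂ := by change g ≫ 𝟙 c = biprod.lift k g ≫ biprod.snd; simp
      comm₃ := by change m ≫ (𝟙 X)⟦(1 : ℤ)⟧' = 𝟙 c ≫ 0; simp [hm] }
  have : IsIso φ.hom₂ := isIso₂_of_isIso₁₃ φ hc (binaryBiproductTriangle_distinguished X c)
    (by change IsIso (𝟙 X); infer_instance) (by change IsIso (𝟙 c); infer_instance)
  exact ⟨c, ⟨@asIso _ _ _ _ φ.hom₂ this⟩⟩

/-- `Z ⊞ 0 ≅ Z`. -/
noncomputable def biprodZeroIso (Z : C) : Z ≅ Z ⊞ (0 : C) where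
  hom := biprod.inl
  inv := biprod.fst
  hom_inv_id := by simp
  inv_hom_id := by
    apply biprod.hom_ext
    · simp
    · apply (isZero_zero C).eq_of_tgt

end Aux

section Aux2

set_option linter.unusedSectionVars false
open ZeroObject

/-- Closure properties of a class of objects. -/
structure Stable (S : Set C) : Prop where
  iso : ∀ {X Y : C}, (X ≅ Y) → X ∈ S → Y ∈ S
  zero : ∀ {X : C}, IsZero X → X ∈ S
  shift : ∀ {X : C} (n : ℤ), X ∈ S → (X⟦n⟧) ∈ S
  sum : ∀ {X Y : C}, X ∈ S → Y ∈ S → (X ⊞ Y) ∈ S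

lemma stable_bracket (I : Set C) : Stable (bracket I) where
  iso := fun e h => bracketMem.iso e h
  zero := fun h => bracketMem.zero h
  shift := fun n h => bracketMem.shift n h
  sum := fun h h' => bracketMem.sum h h'

lemma angle_smd_closed {S : Set C} : sd (angle S) ⊆ angle S := by
  rintro Z ⟨K, hK, hZK⟩
  exact angleMem.smd hZK hK

lemma bracket_subset_angle (I : Set C) : bracket I ⊆ angle I := by
  intro X hX
  induction hX with
  | of h => exact angleMem.of h
  | zero h => exact angleMem.zero h
  | shift n _ ih => exact angleMem.shift n ih
  | sum _ _ ih ih' => exact angleMem.sum ih ih'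
  | iso e _ ih => exact angleMem.iso e ih

lemma angle_mono {S T : Set C} (h : S ⊆ T) : angle S ⊆ angle T := by
  intro X hX
  induction hX with
  | of hx => exact angleMem.of (h hx)
  | zero hx => exact angleMem.zero hx
  | shift n _ ih => exact angleMem.shift n ih
  | sum _ _ ih ih' => exact angleMem.sum ih ih'
  | smd hs _ ih => exact angleMem.smd hs ih
  | iso e _ ih => exact angleMem.iso e ih

lemma angle_sd_of_stable {S : Set C} (hS : Stable S) : angle (sd S) = sd S := by
  apply Set.Subset.antisymm
  · intro X hX
    induction hX with
    | of hx => exact hx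
    | zero hx => exact ⟨_, hS.zero hx, isSummand_refl _⟩
    | shift n _ ih =>
        obtain ⟨K, hK, hs⟩ := ih
        exact ⟨K⟦n⟧, hS.shift n hK, isSummand_shift hs n⟩
    | sum _ _ ih ih' =>
        obtain ⟨K, hK, hs⟩ := ih
        obtain ⟨L, hL, hs'⟩ := ih'
        exact ⟨K ⊞ L, hS.sum hK hL, isSummand_biprod hs hs'⟩
    | smd hsm _ ih =>
        obtain ⟨K, hK, hs⟩ := ih
        exact ⟨K, hK, isSummand_trans hsm hs⟩
    | iso e _ ih =>
        obtain ⟨K, hK, hs⟩ := ih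
        exact ⟨K, hK, isSummand_trans (isSummand_of_iso e.symm) hs⟩
  · exact fun X hX => angleMem.of hX

lemma star_mono {A B A' B' : Set C} (hA : A ⊆ A') (hB : B ⊆ B') :
    star A B ⊆ star A' B' := by
  rintro K ⟨K₀, K₁, f, g, h, hT, h₀, h₁⟩
  exact ⟨K₀, K₁, f, g, h, hT, hA h₀, hB h₁⟩

lemma stable_star {A B : Set C} (hA : Stable A) (hB : Stable B) :
    Stable (star A B) where
  iso := by
    rintro X Y e ⟨K₀, K₁, f, g, h, hT, h₀, h₁⟩
    exact ⟨K₀, K₁, f ≫ e.hom, e.inv ≫ g, _,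
      dist_transport hT (Iso.refl _) e.symm (Iso.refl _) _ _
        (by change (f ≫ e.hom) ≫ e.inv = 𝟙 K₀ ≫ f; simp)
        (by change (e.inv ≫ g) ≫ 𝟙 K₁ = e.inv ≫ g; simp), h₀, h₁⟩
  zero := by
    intro X hX
    exact ⟨X, 0, 𝟙 X, 0, 0, contractible_distinguished X, hA.zero hX,
      hB.zero (isZero_zero C)⟩
  shift := by
    rintro X n ⟨K₀, K₁, f, g, h, hT, h₀, h₁⟩
    have hT' := Triangle.shift_distinguished _ hT n
    exact ⟨_, _, ((Triangle.shiftFunctor C n).obj (Triangle.mk f g h)).mor₁,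
      ((Triangle.shiftFunctor C n).obj (Triangle.mk f g h)).mor₂,
      ((Triangle.shiftFunctor C n).obj (Triangle.mk f g h)).mor₃,
      hT', hA.shift n h₀, hB.shift n h₁⟩
  sum := by
    rintro X Y ⟨K₀, K₁, f, g, h, hT, h₀, h₁⟩ ⟨L₀, L₁, f', g', h', hT', h₀', h₁'⟩
    obtain ⟨h'', hsum⟩ := sum_triangle_distinguished hT hT'
    exact ⟨K₀ ⊞ L₀, K₁ ⊞ L₁, _, _, h'', hsum, hA.sum h₀ h₀', hB.sum h₁ h₁'⟩

lemma star_sd_subset {A B : Set C} : star (sd A) (sd B) ⊆ sd (star A B) := by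
  rintro K ⟨K₀, K₁, f, g, h, hT, ⟨A', hA', hsA⟩, ⟨B', hB', hsB⟩⟩
  obtain ⟨c, ⟨ec⟩⟩ := exists_biprod_iso_of_isSummand hsA
  obtain ⟨d, ⟨ed⟩⟩ := exists_biprod_iso_of_isSummand hsB
  obtain ⟨h₁, hT₁⟩ := sum_triangle_distinguished hT (contractible_distinguished c)
  obtain ⟨h₂, hT₂⟩ := sum_triangle_distinguished hT₁ (contractible_distinguished₁ d)
  refine ⟨(K ⊞ c) ⊞ d, ?_,
    isSummand_trans (isSummand_biprod_left K c) (isSummand_biprod_left _ d)⟩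
  have eA : A' ≅ (K₀ ⊞ c) ⊞ (0 : C) := ec ≪≫ biprodZeroIso _
  have eB : B' ≅ (K₁ ⊞ (0 : C)) ⊞ d :=
    ed ≪≫ biprod.mapIso (biprodZeroIso K₁) (Iso.refl d)
  exact ⟨A', B',
    eA.hom ≫ biprod.map (biprod.map f (𝟙 c)) (0 : (0 : C) ⟶ d),
    biprod.map (biprod.map g 0) (𝟙 d) ≫ eB.inv, _,
    dist_transport hT₂ eA (Iso.refl _) eB _ _ (by exact comp_id _)
      (by simp; erw [Category.assoc, eB.inv_hom_id, comp_id, id_comp]), hA', hB'⟩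

lemma stable_bracketN (I : Set C) : ∀ n : ℕ, Stable (bracketN I (n + 1))
  | 0 => stable_bracket I
  | (n + 1) => stable_star (stable_bracketN I n) (stable_bracket I)

lemma angle_eq_sd_bracket (I : Set C) : angle I = sd (bracket I) := by
  apply Set.Subset.antisymm
  · intro X hX
    have h1 : I ⊆ sd (bracket I) := fun Y hY => ⟨Y, bracketMem.of hY, isSummand_refl Y⟩
    have := angle_mono h1 hX
    rwa [angle_sd_of_stable (stable_bracket I)] at this
  · rintro Z ⟨K, hK, hZK⟩
    exact angleMem.smd hZK (bracket_subset_angle I hK)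

end Aux2

/-- For any full subcategory `ℐ` of a triangulated category and any `n ≥ 1`,
`⟨ℐ⟩_n = ([ℐ]_n)_sd`. -/
theorem angleN_eq_sd_bracketN (I : Set C) (n : ℕ) (hn : 1 ≤ n) :
    angleN I n = sd (bracketN I n) := by
  obtain ⟨m, rfl⟩ : ∃ m, n = m + 1 := ⟨n - 1, by omega⟩
  clear hn
  induction m with
  | zero => exact angle_eq_sd_bracket I
  | succ m ih =>
    show angle (star (angleN I (m + 1)) (angle I))
      = sd (star (bracketN I (m + 1)) (bracket I))
    rw [ih, angle_eq_sd_bracket I]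
    apply Set.Subset.antisymm
    · intro X hX
      have := angle_mono (star_sd_subset) hX
      rwa [angle_sd_of_stable (stable_star (stable_bracketN I m) (stable_bracket I))]
        at this
    · intro X hX
      refine angle_smd_closed (sd_mono (fun Y hY => angleMem.of hY)
        (sd_mono (star_mono (subset_sd _) (subset_sd _)) hX))

end RouquierDim
end

section
/- Let 𝒯 be a triangulated category. Let ℐ and 𝒥 be thick full triangulated subcategories such that 𝒯 = ⟨ℐ ∪ 𝒥⟩_∞ and Hom(K, L) = 0 for every object K of 𝒥 and every object L of ℐ. Then 𝒯 = ⟨𝒥 * ℐ⟩; i.e., every object of 𝒯 is a summand of a finite direct sum of shifts of objects that are extensions of an object of ℐ by an object of 𝒥. -/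
open CategoryTheory Category Limits Pretriangulated

universe v u

namespace RouquierDim

variable {C : Type u} [Category.{v} C] [Preadditive C] [HasZeroObject C]
  [HasShift C ℤ] [∀ n : ℤ, (shiftFunctor C n).Additive] [Pretriangulated C]
  [HasBinaryBiproducts C]

/-- `⟨ℐ⟩_∞ = ⋃_{n ∈ ℕ} ⟨ℐ⟩_n`. -/
def angleInf (I : Set C) : Set C := ⋃ n : ℕ, angleN I n

/-- A thick full triangulated subcategory: a strictly full subcategory containing the zero
objects, closed under shifts, extensions (hence cones), and summands. -/
structure IsThickTriangulatedSub (S : Set C) : Prop where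
  zero : ∀ X : C, IsZero X → X ∈ S
  iso_closed : ∀ {X Y : C}, (X ≅ Y) → X ∈ S → Y ∈ S
  shift : ∀ (X : C) (n : ℤ), X ∈ S → X⟦n⟧ ∈ S
  ext₂ : ∀ (T : Triangle C), T ∈ (distTriang C) → T.obj₁ ∈ S → T.obj₃ ∈ S → T.obj₂ ∈ S
  summand : ∀ {X Y : C}, IsSummand X Y → Y ∈ S → X ∈ S

open ZeroObject

set_option linter.unusedSectionVars false

section Aux

lemma postcomp_bij_shift' {X Y W' W : C} (f : X ⟶ Y) (n : ℤ) (e : ((W'⟦n⟧ : C) ≅ W))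
    (h : Function.Bijective (fun g : W' ⟶ X => g ≫ f)) :
    Function.Bijective (fun g : W ⟶ (X⟦n⟧ : C) => g ≫ f⟦n⟧') := by
  have hΦ : ∀ (V : C), Function.Bijective (fun g : W' ⟶ V => e.inv ≫ g⟦n⟧') := by
    intro V
    constructor
    · intro g₁ g₂ hg
      exact (shiftFunctor C n).map_injective ((cancel_epi e.inv).mp hg)
    · intro g
      obtain ⟨g', hg'⟩ := (shiftFunctor C n).map_surjective (e.hom ≫ g)
      refine ⟨g', ?_⟩
      dsimp only
      rw [hg', Iso.inv_hom_id_assoc]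
  have key : (fun g : W ⟶ (X⟦n⟧ : C) => g ≫ f⟦n⟧') ∘ (fun g : W' ⟶ X => e.inv ≫ g⟦n⟧')
      = (fun g : W' ⟶ Y => e.inv ≫ g⟦n⟧') ∘ (fun g : W' ⟶ X => g ≫ f) := by
    funext g
    simp [Functor.map_comp]
  exact (Function.Bijective.of_comp_iff _ (hΦ X)).mp (key ▸ ((hΦ Y).comp h))

lemma precomp_bij_shift' {X Y W' W : C} (f : X ⟶ Y) (n : ℤ) (e : ((W'⟦n⟧ : C) ≅ W))
    (h : Function.Bijective (fun g : Y ⟶ W' => f ≫ g)) :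
    Function.Bijective (fun g : (Y⟦n⟧ : C) ⟶ W => f⟦n⟧' ≫ g) := by
  have hΦ : ∀ (V : C), Function.Bijective (fun g : V ⟶ W' => g⟦n⟧' ≫ e.hom) := by
    intro V
    constructor
    · intro g₁ g₂ hg
      exact (shiftFunctor C n).map_injective ((cancel_mono e.hom).mp hg)
    · intro g
      obtain ⟨g', hg'⟩ := (shiftFunctor C n).map_surjective (g ≫ e.inv)
      refine ⟨g', ?_⟩
      dsimp only
      rw [hg', assoc, Iso.inv_hom_id, comp_id]
  have key : (fun g : (Y⟦n⟧ : C) ⟶ W => f⟦n⟧' ≫ g) ∘ (fun g : Y ⟶ W' => g⟦n⟧' ≫ e.hom)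
      = (fun g : X ⟶ W' => g⟦n⟧' ≫ e.hom) ∘ (fun g : Y ⟶ W' => f ≫ g) := by
    funext g
    simp [Functor.map_comp]
  exact (Function.Bijective.of_comp_iff _ (hΦ Y)).mp (key ▸ ((hΦ X).comp h))

lemma postcomp_bij_of_vanishing (T' : Triangle C) (hT' : T' ∈ distTriang C) (W : C)
    (h0 : ∀ f : W ⟶ T'.obj₃, f = 0) (h1 : ∀ f : W ⟶ ((T'.obj₃)⟦(-1 : ℤ)⟧ : C), f = 0) :
    Function.Bijective (fun g : W ⟶ T'.obj₁ => g ≫ T'.mor₁) := by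
  constructor
  · have ker : ∀ g : W ⟶ T'.obj₁, g ≫ T'.mor₁ = 0 → g = 0 := by
      intro g hg
      obtain ⟨h, hh⟩ := Triangle.coyoneda_exact₂ _ (inv_rot_of_distTriang _ hT') g hg
      erw [hh, h1 h, zero_comp]; rfl
    intro g₁ g₂ hg
    have h0' : (g₁ - g₂) ≫ T'.mor₁ = 0 := by
      simp only [Preadditive.sub_comp]
      exact sub_eq_zero_of_eq hg
    exact sub_eq_zero.mp (ker _ h0')
  · intro y
    obtain ⟨g, hg⟩ := Triangle.coyoneda_exact₂ _ hT' y (h0 _)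
    exact ⟨g, hg.symm⟩

lemma precomp_bij_of_vanishing (T' : Triangle C) (hT' : T' ∈ distTriang C) (W : C)
    (h0 : ∀ f : T'.obj₁ ⟶ W, f = 0) (h1 : ∀ f : ((T'.obj₁)⟦(1 : ℤ)⟧ : C) ⟶ W, f = 0) :
    Function.Bijective (fun g : T'.obj₃ ⟶ W => T'.mor₂ ≫ g) := by
  constructor
  · have ker : ∀ g : T'.obj₃ ⟶ W, T'.mor₂ ≫ g = 0 → g = 0 := by
      intro g hg
      obtain ⟨h, hh⟩ := Triangle.yoneda_exact₃ _ hT' g hg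
      rw [hh, h1 h, comp_zero]
    intro g₁ g₂ hg
    have h0' : T'.mor₂ ≫ (g₁ - g₂) = 0 := by
      simp only [Preadditive.comp_sub]
      exact sub_eq_zero_of_eq hg
    exact sub_eq_zero.mp (ker _ h0')
  · intro y
    obtain ⟨g, hg⟩ := Triangle.yoneda_exact₂ _ hT' y (h0 _)
    exact ⟨g, hg.symm⟩


lemma five_cov {T₁ T₂ : Triangle C} (hT₁ : T₁ ∈ distTriang C) (hT₂ : T₂ ∈ distTriang C)
    (φ : T₁ ⟶ T₂) (P : C → Prop) (hP : ∀ (W : C) (n : ℤ), P W → P ((W⟦n⟧ : C)))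
    (hα : ∀ W, P W → Function.Bijective (fun g : W ⟶ T₁.obj₁ => g ≫ φ.hom₁))
    (hγ : ∀ W, P W → Function.Bijective (fun g : W ⟶ T₁.obj₃ => g ≫ φ.hom₃))
    (W : C) (hW : P W) :
    Function.Bijective (fun g : W ⟶ T₁.obj₂ => g ≫ φ.hom₂) := by
  constructor
  · have ker : ∀ y : W ⟶ T₁.obj₂, y ≫ φ.hom₂ = 0 → y = 0 := by
      intro y hy
      have h1 : (y ≫ T₁.mor₂) ≫ φ.hom₃ = 0 := by
        rw [assoc, φ.comm₂, ← assoc, hy, zero_comp]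
      have h2 : y ≫ T₁.mor₂ = 0 := by
        apply (hγ W hW).injective
        dsimp only
        rw [h1, zero_comp]
      obtain ⟨x, hx⟩ := Triangle.coyoneda_exact₂ _ hT₁ y h2
      have h3 : (x ≫ φ.hom₁) ≫ T₂.mor₁ = 0 := by
        rw [assoc, ← φ.comm₁, ← assoc, ← hx, hy]
      obtain ⟨z, hz⟩ := Triangle.coyoneda_exact₂ _ (inv_rot_of_distTriang _ hT₂)
        (x ≫ φ.hom₁) h3
      have hbij : Function.Bijective
          (fun g : W ⟶ ((T₁.obj₃)⟦(-1 : ℤ)⟧ : C) => g ≫ (φ.hom₃)⟦(-1 : ℤ)⟧') :=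
        postcomp_bij_shift' φ.hom₃ (-1) (shiftShiftNeg W 1) (hγ _ (hP W 1 hW))
      obtain ⟨z₁, hz₁⟩ := hbij.surjective z
      have hcomm : T₁.invRotate.mor₁ ≫ φ.hom₁ = ((φ.hom₃)⟦(-1 : ℤ)⟧') ≫ T₂.invRotate.mor₁ :=
        ((invRotate C).map φ).comm₁
      have h4 : x ≫ φ.hom₁ = (z₁ ≫ T₁.invRotate.mor₁) ≫ φ.hom₁ := by
        erw [hz, ← hz₁, assoc, ← hcomm, assoc]; rfl
      have h5 : x = z₁ ≫ T₁.invRotate.mor₁ := (hα W hW).injective h4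
      have h6 : T₁.invRotate.mor₁ ≫ T₁.mor₁ = 0 :=
        comp_distTriang_mor_zero₁₂ _ (inv_rot_of_distTriang _ hT₁)
      erw [hx, h5, assoc, h6, comp_zero]
    intro g₁ g₂ hg
    have h0' : (g₁ - g₂) ≫ φ.hom₂ = 0 := by
      simp only [Preadditive.sub_comp]
      exact sub_eq_zero_of_eq hg
    exact sub_eq_zero.mp (ker _ h0')
  · intro y
    obtain ⟨z₁, hz₁⟩ := (hγ W hW).surjective (y ≫ T₂.mor₂)
    dsimp only at hz₁
    have h1 : (z₁ ≫ T₁.mor₃) ≫ (φ.hom₁)⟦(1 : ℤ)⟧' = 0 := by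
      rw [assoc, φ.comm₃, ← assoc, hz₁, assoc, comp_distTriang_mor_zero₂₃ _ hT₂, comp_zero]
    have hbij : Function.Bijective
        (fun g : W ⟶ ((T₁.obj₁)⟦(1 : ℤ)⟧ : C) => g ≫ (φ.hom₁)⟦(1 : ℤ)⟧') :=
      postcomp_bij_shift' φ.hom₁ 1 (shiftNegShift W 1) (hα _ (hP W (-1) hW))
    have h2 : z₁ ≫ T₁.mor₃ = 0 := by
      apply hbij.injective
      dsimp only
      rw [h1, zero_comp]
    obtain ⟨y₁, hy₁⟩ := Triangle.coyoneda_exact₃ _ hT₁ z₁ h2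
    have h3 : (y - y₁ ≫ φ.hom₂) ≫ T₂.mor₂ = 0 := by
      rw [Preadditive.sub_comp, assoc, ← φ.comm₂, ← assoc, ← hy₁, hz₁, sub_self]
    obtain ⟨x₂, hx₂⟩ := Triangle.coyoneda_exact₂ _ hT₂ _ h3
    obtain ⟨x₁, hx₁⟩ := (hα W hW).surjective x₂
    dsimp only at hx₁
    refine ⟨y₁ + x₁ ≫ T₁.mor₁, ?_⟩
    dsimp only
    rw [Preadditive.add_comp, assoc, φ.comm₁, ← assoc, hx₁, ← hx₂]
    abel

lemma five_con {T₁ T₂ : Triangle C} (hT₁ : T₁ ∈ distTriang C) (hT₂ : T₂ ∈ distTriang C)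
    (φ : T₁ ⟶ T₂) (P : C → Prop) (hP : ∀ (W : C) (n : ℤ), P W → P ((W⟦n⟧ : C)))
    (hα : ∀ W, P W → Function.Bijective (fun g : T₂.obj₁ ⟶ W => φ.hom₁ ≫ g))
    (hγ : ∀ W, P W → Function.Bijective (fun g : T₂.obj₃ ⟶ W => φ.hom₃ ≫ g))
    (W : C) (hW : P W) :
    Function.Bijective (fun g : T₂.obj₂ ⟶ W => φ.hom₂ ≫ g) := by
  constructor
  · have ker : ∀ y : T₂.obj₂ ⟶ W, φ.hom₂ ≫ y = 0 → y = 0 := by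
      intro y hy
      have h1 : φ.hom₁ ≫ (T₂.mor₁ ≫ y) = 0 := by
        rw [← assoc, ← φ.comm₁, assoc, hy, comp_zero]
      have h2 : T₂.mor₁ ≫ y = 0 := by
        apply (hα W hW).injective
        dsimp only
        rw [h1, comp_zero]
      obtain ⟨z₂, hz₂⟩ := Triangle.yoneda_exact₂ _ hT₂ y h2
      have h3 : T₁.mor₂ ≫ (φ.hom₃ ≫ z₂) = 0 := by
        rw [← assoc, φ.comm₂, assoc, ← hz₂, hy]
      obtain ⟨g, hg⟩ := Triangle.yoneda_exact₃ _ hT₁ _ h3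
      have hbij : Function.Bijective
          (fun g : ((T₂.obj₁)⟦(1 : ℤ)⟧ : C) ⟶ W => (φ.hom₁)⟦(1 : ℤ)⟧' ≫ g) :=
        precomp_bij_shift' φ.hom₁ 1 (shiftNegShift W 1) (hα _ (hP W (-1) hW))
      obtain ⟨g₂, hg₂⟩ := hbij.surjective g
      dsimp only at hg₂
      have h4 : φ.hom₃ ≫ z₂ = φ.hom₃ ≫ (T₂.mor₃ ≫ g₂) := by
        rw [hg, ← hg₂, ← assoc, φ.comm₃, assoc]
      have h5 : z₂ = T₂.mor₃ ≫ g₂ := (hγ W hW).injective h4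
      rw [hz₂, h5, ← assoc, comp_distTriang_mor_zero₂₃ _ hT₂, zero_comp]
    intro g₁ g₂ hg
    have h0' : φ.hom₂ ≫ (g₁ - g₂) = 0 := by
      simp only [Preadditive.comp_sub]
      exact sub_eq_zero_of_eq hg
    exact sub_eq_zero.mp (ker _ h0')
  · intro y
    obtain ⟨x₂, hx₂⟩ := (hα W hW).surjective (T₁.mor₁ ≫ y)
    dsimp only at hx₂
    have hcomm : T₁.invRotate.mor₁ ≫ φ.hom₁ = ((φ.hom₃)⟦(-1 : ℤ)⟧') ≫ T₂.invRotate.mor₁ :=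
      ((invRotate C).map φ).comm₁
    have hbij : Function.Bijective
        (fun g : ((T₂.obj₃)⟦(-1 : ℤ)⟧ : C) ⟶ W => (φ.hom₃)⟦(-1 : ℤ)⟧' ≫ g) :=
      precomp_bij_shift' φ.hom₃ (-1) (shiftShiftNeg W 1) (hγ _ (hP W 1 hW))
    have h0 : (φ.hom₃)⟦(-1 : ℤ)⟧' ≫ (T₂.invRotate.mor₁ ≫ x₂) = 0 := by
      erw [← assoc, ← hcomm, assoc, hx₂, ← assoc]
      have h6 : T₁.invRotate.mor₁ ≫ T₁.mor₁ = 0 :=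
        comp_distTriang_mor_zero₁₂ _ (inv_rot_of_distTriang _ hT₁)
      erw [h6, zero_comp]
    have h1 : T₂.invRotate.mor₁ ≫ x₂ = 0 := by
      apply hbij.injective
      dsimp only
      erw [h0, comp_zero]
    obtain ⟨y₂', hy₂'⟩ := Triangle.yoneda_exact₂ _ (inv_rot_of_distTriang _ hT₂) x₂ h1
    obtain ⟨yy, hyy⟩ : ∃ yy : T₂.obj₂ ⟶ W, x₂ = T₂.mor₁ ≫ yy := ⟨y₂', hy₂'⟩
    have h3 : T₁.mor₁ ≫ (y - φ.hom₂ ≫ yy) = 0 := by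
      rw [Preadditive.comp_sub, ← assoc, φ.comm₁, assoc, ← hyy, hx₂, sub_self]
    obtain ⟨z, hz⟩ := Triangle.yoneda_exact₂ _ hT₁ _ h3
    obtain ⟨z₂, hz₂⟩ := (hγ W hW).surjective z
    dsimp only at hz₂
    refine ⟨yy + T₂.mor₂ ≫ z₂, ?_⟩
    dsimp only
    rw [Preadditive.comp_add, ← assoc, ← φ.comm₂, assoc, hz₂, ← hz]
    abel


lemma vanish_shift_to {I : Set C} (hI : IsThickTriangulatedSub I) {W : C}
    (hW : ∀ V ∈ I, ∀ f : W ⟶ V, f = 0) (n : ℤ) :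
    ∀ V ∈ I, ∀ f : (W⟦n⟧ : C) ⟶ V, f = 0 := by
  intro V hV f
  have h := hW _ (hI.shift V (-n) hV) ((shiftShiftNeg W n).inv ≫ f⟦(-n : ℤ)⟧')
  have h2 : f⟦(-n : ℤ)⟧' = 0 :=
    (cancel_epi (shiftShiftNeg W n).inv).mp (by rw [h, comp_zero])
  exact (shiftFunctor C (-n)).map_injective (by rw [h2, Functor.map_zero])

lemma vanish_shift_from {J : Set C} (hJ : IsThickTriangulatedSub J) {W : C}
    (hW : ∀ V ∈ J, ∀ f : V ⟶ W, f = 0) (n : ℤ) :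
    ∀ V ∈ J, ∀ f : V ⟶ (W⟦n⟧ : C), f = 0 := by
  intro V hV f
  have h := hW _ (hJ.shift V (-n) hV) (f⟦(-n : ℤ)⟧' ≫ (shiftShiftNeg W n).hom)
  have h2 : f⟦(-n : ℤ)⟧' = 0 :=
    (cancel_mono (shiftShiftNeg W n).hom).mp (by rw [h, zero_comp])
  exact (shiftFunctor C (-n)).map_injective (by rw [h2, Functor.map_zero])

/-- The key lemma: `star J I` is closed under extensions (no octahedron needed,
thanks to semiorthogonality). -/
lemma star_ext {I J : Set C}
    (hI : IsThickTriangulatedSub I) (hJ : IsThickTriangulatedSub J)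
    (horth : ∀ (K L : C), K ∈ J → L ∈ I → ∀ f : K ⟶ L, f = 0)
    (T : Triangle C) (hT : T ∈ distTriang C)
    (h1 : T.obj₁ ∈ star J I) (h3 : T.obj₃ ∈ star J I) : T.obj₂ ∈ star J I := by
  obtain ⟨A, B, a, bX, c, hTX, hA, hB⟩ := h1
  obtain ⟨A', B', a', bZ, c', hTZ, hA', hB'⟩ := h3
  set TX := Triangle.mk a bX c with hTXdef
  set TZ := Triangle.mk a' bZ c' with hTZdef
  -- predicates
  set PJ : C → Prop := fun W => ∀ V ∈ I, ∀ f : W ⟶ V, f = 0 with hPJdef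
  set PI : C → Prop := fun W => ∀ V ∈ J, ∀ f : V ⟶ W, f = 0 with hPIdef
  have hPJshift : ∀ (W : C) (n : ℤ), PJ W → PJ (W⟦n⟧ : C) :=
    fun W n hW => vanish_shift_to hI hW n
  have hPIshift : ∀ (W : C) (n : ℤ), PI W → PI (W⟦n⟧ : C) :=
    fun W n hW => vanish_shift_from hJ hW n
  have hPJ_J : ∀ W ∈ J, PJ W := fun W hW V hV f => horth _ _ hW hV f
  have hPI_I : ∀ W ∈ I, PI W := fun W hW V hV f => horth _ _ hV hW f
  -- Step 1 : factor δ = a' ≫ T.mor₃ through a⟦1⟧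
  have hδ0 : (a' ≫ T.mor₃) ≫ bX⟦(1 : ℤ)⟧' = 0 :=
    horth _ _ hA' (hI.shift B 1 hB) _
  obtain ⟨g0, hg0⟩ := Triangle.coyoneda_exact₁ _ (rot_of_distTriang _ hTX)
    (a' ≫ T.mor₃) hδ0
  set ε : A' ⟶ (A⟦(1 : ℤ)⟧ : C) := -g0 with hεdef
  have hε : ε ≫ a⟦(1 : ℤ)⟧' = a' ≫ T.mor₃ := by
    erw [hg0, hεdef]
    dsimp [TX]
    simp
    erw [Preadditive.neg_comp, Preadditive.comp_neg]; rfl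
  -- Step 2 : triangle A ⟶ M ⟶ A' with mor₃ = ε ; M ∈ J
  obtain ⟨M, p, q, hTM⟩ := distinguished_cocone_triangle₂ ε
  set TM := Triangle.mk p q ε with hTMdef
  have hM : M ∈ J := hJ.ext₂ TM hTM hA hA'
  -- Step 3 : fill-in m : M ⟶ Y
  obtain ⟨m, hm₁, hm₂⟩ : ∃ m : M ⟶ T.obj₂, p ≫ m = a ≫ T.mor₁ ∧ q ≫ a' = m ≫ T.mor₂ :=
    complete_distinguished_triangle_morphism₂ TM T hTM hT a a' hε
  let φM : TM ⟶ T := ⟨a, m, a', hm₁, hm₂, hε⟩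
  -- Step 4 : factor η = T.mor₃ ≫ bX⟦1⟧ through bZ
  have hη0 : TZ.mor₁ ≫ (T.mor₃ ≫ bX⟦(1 : ℤ)⟧') = 0 := by
    erw [← assoc]
    exact hδ0
  obtain ⟨θ, hθ⟩ := Triangle.yoneda_exact₂ _ hTZ (T.mor₃ ≫ bX⟦(1 : ℤ)⟧') hη0
  -- Step 5 : triangle B ⟶ N ⟶ B' with mor₃ = θ ; N ∈ I
  obtain ⟨N, fN, gN, hTN⟩ := distinguished_cocone_triangle₂ θ
  set TN := Triangle.mk fN gN θ with hTNdef
  have hN : N ∈ I := hI.ext₂ TN hTN hB hB'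
  -- Step 6 : fill-in n : Y ⟶ N
  obtain ⟨n, hn₁, hn₂⟩ : ∃ n : T.obj₂ ⟶ N, T.mor₁ ≫ n = bX ≫ fN ∧ T.mor₂ ≫ bZ = n ≫ gN :=
    complete_distinguished_triangle_morphism₂ T TN hT hTN bX bZ hθ
  let φN : T ⟶ TN := ⟨bX, n, bZ, hn₁, hn₂, hθ⟩
  -- Step 7 : cones
  obtain ⟨Q, s, t, hTQ⟩ : ∃ (Q : C) (s : T.obj₂ ⟶ Q) (t : Q ⟶ (M⟦(1 : ℤ)⟧ : C)),
      Triangle.mk m s t ∈ distTriang C := distinguished_cocone_triangle m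
  obtain ⟨P, eP, fP, hTP⟩ : ∃ (P : C) (eP : P ⟶ T.obj₂) (fP : N ⟶ (P⟦(1 : ℤ)⟧ : C)),
      Triangle.mk eP n fP ∈ distTriang C := distinguished_cocone_triangle₁ n
  have hTQ12 : m ≫ s = 0 := comp_distTriang_mor_zero₁₂ _ hTQ
  have hTQ31 : t ≫ m⟦(1 : ℤ)⟧' = 0 := comp_distTriang_mor_zero₃₁ _ hTQ
  have hTP12 : eP ≫ n = 0 := comp_distTriang_mor_zero₁₂ _ hTP
  have hTP23 : n ≫ fP = 0 := comp_distTriang_mor_zero₂₃ _ hTP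
  -- bijectivity of postcomposition with m
  have hbm : ∀ W, PJ W → Function.Bijective (fun g : W ⟶ M => g ≫ m) := by
    intro W hW
    exact five_cov hTM hT φM PJ hPJshift
      (fun W hW => postcomp_bij_of_vanishing TX hTX W (fun f => hW B hB f)
        (fun f => hW _ (hI.shift B (-1) hB) f))
      (fun W hW => postcomp_bij_of_vanishing TZ hTZ W (fun f => hW B' hB' f)
        (fun f => hW _ (hI.shift B' (-1) hB') f)) W hW
  -- bijectivity of precomposition with n
  have hbn : ∀ W, PI W → Function.Bijective (fun g : N ⟶ W => n ≫ g) := by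
    intro W hW
    exact five_con hT hTN φN PI hPIshift
      (fun W hW => precomp_bij_of_vanishing TX hTX W (fun f => hW A hA f)
        (fun f => hW _ (hJ.shift A 1 hA) f))
      (fun W hW => precomp_bij_of_vanishing TZ hTZ W (fun f => hW A' hA' f)
        (fun f => hW _ (hJ.shift A' 1 hA') f)) W hW
  -- Q is right-orthogonal to J
  have hQorth : ∀ V ∈ J, ∀ f : V ⟶ Q, f = 0 := by
    intro V hV f
    have h1 : (f ≫ t) ≫ m⟦(1 : ℤ)⟧' = 0 := by
      rw [assoc, hTQ31, comp_zero]
    have hb1 : Function.Bijective (fun g : V ⟶ (M⟦(1 : ℤ)⟧ : C) => g ≫ m⟦(1 : ℤ)⟧') :=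
      postcomp_bij_shift' m 1 (shiftNegShift V 1)
        (hbm _ (hPJshift V (-1) (hPJ_J V hV)))
    have h2 : f ≫ t = 0 := by
      apply hb1.injective
      dsimp only
      rw [h1, zero_comp]
    obtain ⟨g, hg⟩ : ∃ g : V ⟶ T.obj₂, f = g ≫ s :=
      Triangle.coyoneda_exact₃ _ hTQ f h2
    obtain ⟨g', hg'⟩ := (hbm V (hPJ_J V hV)).surjective g
    dsimp only at hg'
    rw [hg, ← hg', assoc, hTQ12, comp_zero]
  -- P is left-orthogonal to I
  have hPorth : ∀ V ∈ I, ∀ f : P ⟶ V, f = 0 := by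
    intro V hV f
    have h1 : n ≫ (fP ≫ f⟦(1 : ℤ)⟧') = 0 := by
      rw [← assoc, hTP23, zero_comp]
    have h2 : fP ≫ f⟦(1 : ℤ)⟧' = 0 := by
      apply (hbn _ (hPIshift V 1 (hPI_I V hV))).injective
      dsimp only
      rw [h1, comp_zero]
    obtain ⟨g, hg⟩ : ∃ g : ((T.obj₂)⟦(1 : ℤ)⟧ : C) ⟶ (V⟦(1 : ℤ)⟧ : C),
        f⟦(1 : ℤ)⟧' = (-(eP⟦(1 : ℤ)⟧')) ≫ g :=
      Triangle.yoneda_exact₃ _ (rot_of_distTriang _ hTP) (f⟦(1 : ℤ)⟧') h2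
    obtain ⟨g₀, hg₀⟩ := (shiftFunctor C (1 : ℤ)).map_surjective g
    have h3 : f⟦(1 : ℤ)⟧' = ((-eP) ≫ g₀)⟦(1 : ℤ)⟧' := by
      rw [hg, ← hg₀, Functor.map_comp, Functor.map_neg]
    have h4 : f = (-eP) ≫ g₀ := (shiftFunctor C (1 : ℤ)).map_injective h3
    obtain ⟨g₁, hg₁⟩ := (hbn V (hPI_I V hV)).surjective g₀
    dsimp only at hg₁
    rw [h4, ← hg₁, Preadditive.neg_comp, ← assoc, hTP12, zero_comp, neg_zero]
  -- maps q̄ : Q ⟶ N and p̄ : N ⟶ Q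
  have hmn : m ≫ n = 0 := horth M N hM hN _
  obtain ⟨qbar, hqbar⟩ : ∃ qb : Q ⟶ N, n = s ≫ qb :=
    Triangle.yoneda_exact₂ _ hTQ n hmn
  have hes : eP ≫ s = 0 := by
    obtain ⟨g, hg⟩ := (hbm P hPorth).surjective eP
    dsimp only at hg
    rw [← hg, assoc, hTQ12, comp_zero]
  obtain ⟨pbar, hpbar⟩ : ∃ pb : N ⟶ Q, s = n ≫ pb :=
    Triangle.yoneda_exact₂ _ hTP s hes
  -- they are mutually inverse
  have hpq : pbar ≫ qbar = 𝟙 N := by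
    have h1 : n ≫ (pbar ≫ qbar - 𝟙 N) = 0 := by
      rw [Preadditive.comp_sub, comp_id, ← assoc, ← hpbar, ← hqbar, sub_self]
    obtain ⟨g, hg⟩ : ∃ g : ((P)⟦(1 : ℤ)⟧ : C) ⟶ N, pbar ≫ qbar - 𝟙 N = fP ≫ g :=
      Triangle.yoneda_exact₃ _ hTP _ h1
    have hgz : g = 0 := hPJshift P 1 hPorth N hN g
    rw [← sub_eq_zero, hg, hgz, comp_zero]
  have hqp : qbar ≫ pbar = 𝟙 Q := by
    have h1 : s ≫ (qbar ≫ pbar - 𝟙 Q) = 0 := by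
      rw [Preadditive.comp_sub, comp_id, ← assoc, ← hqbar, ← hpbar, sub_self]
    obtain ⟨g, hg⟩ : ∃ g : ((M)⟦(1 : ℤ)⟧ : C) ⟶ Q, qbar ≫ pbar - 𝟙 Q = t ≫ g :=
      Triangle.yoneda_exact₃ _ hTQ _ h1
    have hgz : g = 0 := hQorth _ (hJ.shift M 1 hM) g
    rw [← sub_eq_zero, hg, hgz, comp_zero]
  have hQI : Q ∈ I := hI.iso_closed (Iso.mk pbar qbar hpq hqp) hN
  exact ⟨M, Q, m, s, t, hTQ, hM, hQI⟩


end Aux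

section Closures

variable {I J : Set C}

lemma star_zero (hI : IsThickTriangulatedSub I) (hJ : IsThickTriangulatedSub J)
    {X : C} (hX : IsZero X) : X ∈ star J I :=
  ⟨X, 0, 𝟙 X, 0, 0, contractible_distinguished X, hJ.zero X hX,
    hI.zero 0 (isZero_zero C)⟩

lemma star_mem_left (hI : IsThickTriangulatedSub I) {X : C} (hX : X ∈ J) :
    X ∈ star J I :=
  ⟨X, 0, 𝟙 X, 0, 0, contractible_distinguished X, hX, hI.zero 0 (isZero_zero C)⟩

lemma star_mem_right (hJ : IsThickTriangulatedSub J) {X : C} (hX : X ∈ I) :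
    X ∈ star J I :=
  ⟨0, X, 0, 𝟙 X, 0, contractible_distinguished₁ X, hJ.zero 0 (isZero_zero C), hX⟩

lemma star_iso {X Y : C} (e : X ≅ Y) (hX : X ∈ star J I) : Y ∈ star J I := by
  obtain ⟨K₀, K₁, f, g, h, hT, h₀, h₁⟩ := hX
  refine ⟨K₀, K₁, f ≫ e.hom, e.inv ≫ g, h, ?_, h₀, h₁⟩
  refine isomorphic_distinguished _ hT _ ?_
  exact Triangle.isoMk _ _ (Iso.refl _) e.symm (Iso.refl _) (by erw [id_comp, assoc, Iso.hom_inv_id, comp_id]; rfl) (by erw [comp_id]; rfl)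
      (by erw [Iso.refl_hom, Iso.refl_hom, CategoryTheory.Functor.map_id, comp_id, id_comp]; rfl)

lemma star_shift (hI : IsThickTriangulatedSub I) (hJ : IsThickTriangulatedSub J)
    {X : C} (hX : X ∈ star J I) (n : ℤ) : (X⟦n⟧ : C) ∈ star J I := by
  obtain ⟨K₀, K₁, f, g, h, hT, h₀, h₁⟩ := hX
  have hT' := Triangle.shift_distinguished _ hT n
  set T' := (CategoryTheory.shiftFunctor (Triangle C) n).obj (Triangle.mk f g h) with hT'def
  exact ⟨K₀⟦n⟧, K₁⟦n⟧, T'.mor₁, T'.mor₂, T'.mor₃, hT', hJ.shift _ n h₀, hI.shift _ n h₁⟩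

lemma star_sum (hI : IsThickTriangulatedSub I) (hJ : IsThickTriangulatedSub J)
    (horth : ∀ (K L : C), K ∈ J → L ∈ I → ∀ f : K ⟶ L, f = 0)
    {X Y : C} (hX : X ∈ star J I) (hY : Y ∈ star J I) : (X ⊞ Y) ∈ star J I :=
  star_ext hI hJ horth _ (binaryBiproductTriangle_distinguished X Y) hX hY

lemma exists_summand_of_angleMem (hI : IsThickTriangulatedSub I)
    (hJ : IsThickTriangulatedSub J)
    (horth : ∀ (K L : C), K ∈ J → L ∈ I → ∀ f : K ⟶ L, f = 0)
    {X : C} (hX : angleMem (star J I) X) :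
    ∃ W, W ∈ star J I ∧ IsSummand X W := by
  induction hX with
  | of hX => exact ⟨_, hX, 𝟙 _, 𝟙 _, by simp⟩
  | zero hX => exact ⟨_, star_zero hI hJ hX, 𝟙 _, 𝟙 _, by simp⟩
  | shift n hX ih =>
    obtain ⟨W, hW, r, k, hrk⟩ := ih
    exact ⟨W⟦n⟧, star_shift hI hJ hW n, r⟦n⟧', k⟦n⟧',
      by rw [← CategoryTheory.Functor.map_comp, hrk, CategoryTheory.Functor.map_id]⟩
  | sum hX hY ihX ihY =>
    obtain ⟨W₁, hW₁, r₁, k₁, hrk₁⟩ := ihX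
    obtain ⟨W₂, hW₂, r₂, k₂, hrk₂⟩ := ihY
    refine ⟨W₁ ⊞ W₂, star_sum hI hJ horth hW₁ hW₂,
      biprod.map r₁ r₂, biprod.map k₁ k₂, ?_⟩
    ext <;> simp [hrk₁, hrk₂]
  | smd h hY ih =>
    obtain ⟨r₁, k₁, hrk₁⟩ := h
    obtain ⟨W, hW, r₂, k₂, hrk₂⟩ := ih
    exact ⟨W, hW, r₁ ≫ r₂, k₂ ≫ k₁,
      by rw [assoc, ← assoc r₂, hrk₂, id_comp, hrk₁]⟩
  | iso e hX ih =>
    obtain ⟨W, hW, r, k, hrk⟩ := ih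
    exact ⟨W, hW, e.inv ≫ r, k ≫ e.hom,
      by rw [assoc, ← assoc r, hrk, id_comp, Iso.inv_hom_id]⟩

lemma angleMem_bind {S S' : Set C} (h : ∀ X ∈ S', angleMem S X) {X : C}
    (hX : angleMem S' X) : angleMem S X := by
  induction hX with
  | of h' => exact h _ h'
  | zero h' => exact .zero h'
  | shift n _ ih => exact .shift n ih
  | sum _ _ ih₁ ih₂ => exact .sum ih₁ ih₂
  | smd hs _ ih => exact .smd hs ih
  | iso e _ ih => exact .iso e ih

lemma angle_star_ext (hI : IsThickTriangulatedSub I) (hJ : IsThickTriangulatedSub J)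
    (horth : ∀ (K L : C), K ∈ J → L ∈ I → ∀ f : K ⟶ L, f = 0)
    (T : Triangle C) (hT : T ∈ distTriang C)
    (h₁ : angleMem (star J I) T.obj₁) (h₃ : angleMem (star J I) T.obj₃) :
    angleMem (star J I) T.obj₂ := by
  obtain ⟨W₁, hW₁, r₁, k₁, hrk₁⟩ := exists_summand_of_angleMem hI hJ horth h₁
  obtain ⟨W₃, hW₃, r₃, k₃, hrk₃⟩ := exists_summand_of_angleMem hI hJ horth h₃
  obtain ⟨E, f, g, hTW⟩ : ∃ (E : C) (f : W₁ ⟶ E) (g : E ⟶ W₃),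
      Triangle.mk f g (k₃ ≫ T.mor₃ ≫ r₁⟦(1 : ℤ)⟧') ∈ distTriang C :=
    distinguished_cocone_triangle₂ (k₃ ≫ T.mor₃ ≫ r₁⟦(1 : ℤ)⟧')
  have hE : E ∈ star J I := star_ext hI hJ horth _ hTW hW₁ hW₃
  obtain ⟨ρ, hρ₁, hρ₂⟩ : ∃ ρ : T.obj₂ ⟶ E,
      T.mor₁ ≫ ρ = r₁ ≫ f ∧ T.mor₂ ≫ r₃ = ρ ≫ g :=
    complete_distinguished_triangle_morphism₂ T _ hT hTW r₁ r₃
      (by erw [← assoc r₃, hrk₃, id_comp]; rfl)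
  obtain ⟨κ, hκ₁, hκ₂⟩ : ∃ κ : E ⟶ T.obj₂,
      f ≫ κ = k₁ ≫ T.mor₁ ∧ g ≫ k₃ = κ ≫ T.mor₂ :=
    complete_distinguished_triangle_morphism₂ _ T hTW hT k₁ k₃
      (by erw [assoc, assoc, ← CategoryTheory.Functor.map_comp, hrk₁, CategoryTheory.Functor.map_id, comp_id])
  have hd₁ : T.mor₁ ≫ (ρ ≫ κ - 𝟙 _) = 0 := by
    rw [Preadditive.comp_sub, comp_id, ← assoc, hρ₁, assoc, hκ₁, ← assoc, hrk₁,
      id_comp, sub_self]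
  have hd₂ : (ρ ≫ κ - 𝟙 _) ≫ T.mor₂ = 0 := by
    rw [Preadditive.sub_comp, id_comp, assoc, ← hκ₂, ← assoc, ← hρ₂, assoc, hrk₃,
      comp_id, sub_self]
  obtain ⟨g', hg'⟩ := Triangle.coyoneda_exact₂ _ hT _ hd₂
  obtain ⟨e', he'⟩ := Triangle.yoneda_exact₂ _ hT _ hd₁
  have hdd : (ρ ≫ κ - 𝟙 _) ≫ (ρ ≫ κ - 𝟙 _) = 0 := by
    have heq : (ρ ≫ κ - 𝟙 T.obj₂) ≫ (ρ ≫ κ - 𝟙 T.obj₂)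
        = (g' ≫ T.mor₁) ≫ (T.mor₂ ≫ e') := by rw [← hg', ← he']
    rw [heq, assoc, comp_distTriang_mor_zero₁₂_assoc _ hT, zero_comp, comp_zero]
  refine angleMem.smd ⟨ρ, κ ≫ (𝟙 _ - (ρ ≫ κ - 𝟙 _)), ?_⟩ (angleMem.of hE)
  have expand : ρ ≫ (κ ≫ (𝟙 _ - (ρ ≫ κ - 𝟙 _)))
      = 𝟙 _ - (ρ ≫ κ - 𝟙 _) ≫ (ρ ≫ κ - 𝟙 _) := by
    simp only [Preadditive.comp_sub, Preadditive.sub_comp, comp_id, id_comp, ← assoc]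
    abel
  rw [expand, hdd, sub_zero]

end Closures


/-- Let `ℐ` and `𝒥` be thick full triangulated subcategories with
`𝒯 = ⟨ℐ ∪ 𝒥⟩_∞` and `Hom(K, L) = 0` for every `K ∈ 𝒥` and `L ∈ ℐ`.
Then `𝒯 = ⟨𝒥 * ℐ⟩`. -/
theorem eq_angle_star_of_semiorthogonal (I J : Set C)
    (hI : IsThickTriangulatedSub I) (hJ : IsThickTriangulatedSub J)
    (hgen : angleInf (I ∪ J) = Set.univ)
    (horth : ∀ (K L : C), K ∈ J → L ∈ I → ∀ f : K ⟶ L, f = 0) :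
    angle (star J I) = Set.univ := by
  have hbase : ∀ Y ∈ I ∪ J, angleMem (star J I) Y := by
    rintro Y (hY | hY)
    · exact angleMem.of (star_mem_right hJ hY)
    · exact angleMem.of (star_mem_left hI hY)
  have h1sub : ∀ X ∈ angle (I ∪ J), angleMem (star J I) X :=
    fun X hX => angleMem_bind hbase hX
  have main : ∀ n, ∀ X ∈ angleN (I ∪ J) n, angleMem (star J I) X := by
    intro n
    induction n with
    | zero => intro X hX; exact absurd hX (by simp [angleN])
    | succ n ih =>
      obtain _ | k := n
      · exact h1sub
      · intro X hX
        refine angleMem_bind ?_ hX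
        rintro Y ⟨K₀, K₁, f, g, h, hTY, hK₀, hK₁⟩
        exact angle_star_ext hI hJ horth (Triangle.mk f g h) hTY
          (ih K₀ hK₀) (h1sub K₁ hK₁)
  apply Set.eq_univ_of_forall
  intro X
  have hX : X ∈ angleInf (I ∪ J) := by rw [hgen]; trivial
  obtain ⟨n, hn⟩ := Set.mem_iUnion.mp hX
  exact main n X hn


end RouquierDim
end

section
/- Let R be an algebra of finite type over a field k and let M be a finitely generated R-module. Let 𝔭 be an associated prime of M with dim(R/𝔭) = dim_R M. Suppose f ∈ R satisfies f ∉ 𝔭 and f ∈ 𝔮 for every associated prime 𝔮 of M with 𝔮 ≠ 𝔭. Then dim_R M = dim_{R_f} M_f. -/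
open Polynomial in
theorem exists_aeval_eq_zero_coeff_zero_ne {S D : Type*} [CommRing S] [CommRing D] [IsDomain D]
    [Algebra S D] {x : D} (hx : x ≠ 0) (halg : IsAlgebraic S x) :
    ∃ P : S[X], Polynomial.aeval x P = 0 ∧ P.coeff 0 ≠ 0 := by
  obtain ⟨P, hP0, hPev⟩ := halg
  have key : ∀ (n : ℕ) (P : S[X]), P ≠ 0 → Polynomial.aeval x P = 0 → P.natDegree ≤ n →
      ∃ Q : S[X], Polynomial.aeval x Q = 0 ∧ Q.coeff 0 ≠ 0 := by
    intro n
    induction n with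
    | zero =>
      intro P hP0 hev hd
      refine ⟨P, hev, fun hc => hP0 ?_⟩
      rw [Polynomial.eq_C_of_natDegree_le_zero hd, hc, map_zero]
    | succ n IH =>
      intro P hP0 hev hd
      by_cases hc : P.coeff 0 = 0
      · have hsplit := P.divX_mul_X_add
        have hev' : Polynomial.aeval x P.divX * x = 0 := by
          have : Polynomial.aeval x (P.divX * X + C (P.coeff 0)) = 0 := by rw [hsplit]; exact hev
          simpa [hc] using this
        have hdiv0 : Polynomial.aeval x P.divX = 0 := by
          rcases mul_eq_zero.mp hev' with h | h
          · exact h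
          · exact absurd h hx
        have hdne : P.divX ≠ 0 := by
          intro h
          apply hP0
          rw [← hsplit, h, hc, map_zero, zero_mul, zero_add]
        have hlt : P.divX.natDegree ≤ n := by
          have := Polynomial.natDegree_divX_eq_natDegree_tsub_one (p := P)
          omega
        exact IH P.divX hdne hdiv0 hlt
      · exact ⟨P, hev, hc⟩
  exact key P.natDegree P hP0 hPev le_rfl

/-- Key step: if `ψ : D →ₐ[k] E` has nontrivial kernel, `D` a domain, and the images of
`y` under `ψ` are algebraically independent over `k`, then `D` contains `t+1` algebraically
independent elements. -/
theorem exists_succ_indep_of_ker_ne_bot {k D E : Type*} [Field k] [CommRing D] [IsDomain D]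
    [Algebra k D] [CommRing E] [Algebra k E] (ψ : D →ₐ[k] E)
    (hker : RingHom.ker (ψ : D →+* E) ≠ ⊥) {t : ℕ} {y : Fin t → D}
    (h : AlgebraicIndependent k (⇑ψ ∘ y)) :
    ∃ z : Fin (t + 1) → D, AlgebraicIndependent k z := by
  classical
  obtain ⟨⟨x, hxker⟩, hx0'⟩ := Submodule.nonzero_mem_of_bot_lt (bot_lt_iff_ne_bot.mpr hker)
  have hx0 : x ≠ 0 := fun h => hx0' (Subtype.ext h)
  have hy : AlgebraicIndependent k y := h.of_comp ψ
  have hψx : ψ x = 0 := by simpa [RingHom.mem_ker] using hxker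
  -- x is transcendental over the adjoin of range y
  have htr : Transcendental (Algebra.adjoin k (Set.range y)) x := by
    intro halg
    obtain ⟨P, hPev, hPc⟩ := exists_aeval_eq_zero_coeff_zero_ne hx0 halg
    · -- apply ψ to the relation
      have h1 : (ψ : D →+* E) (Polynomial.eval₂ (algebraMap (Algebra.adjoin k (Set.range y)) D) x P) = 0 := by
        rw [show Polynomial.eval₂ (algebraMap (Algebra.adjoin k (Set.range y)) D) x P
            = Polynomial.aeval x P from rfl, hPev, map_zero]
      rw [Polynomial.hom_eval₂] at h1
      rw [show (ψ : D →+* E) x = (0 : E) from hψx, Polynomial.eval₂_at_zero] at h1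
      -- h1 : ψ (algebraMap _ D (P.coeff 0)) = 0
      set a0 : D := algebraMap (Algebra.adjoin k (Set.range y)) D (P.coeff 0) with ha0
      have ha0mem : a0 ∈ Algebra.adjoin k (Set.range y) := (P.coeff 0).2
      rw [Algebra.adjoin_range_eq_range_aeval] at ha0mem
      obtain ⟨Q, hQ⟩ := ha0mem
      have hQval : MvPolynomial.aeval y Q = a0 := hQ
      have hQ0 : MvPolynomial.aeval (⇑ψ ∘ y) Q = 0 := by
        have h3 : ψ (MvPolynomial.aeval y Q) = MvPolynomial.aeval (fun i => ψ (y i)) Q :=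
          MvPolynomial.comp_aeval_apply (f := y) ψ Q
        have h4 : ψ a0 = 0 := h1
        rw [hQval, h4] at h3
        exact h3.symm
      have hQzero : Q = 0 := h.eq_zero_of_aeval_eq_zero Q hQ0
      apply hPc
      have ha00 : a0 = 0 := by rw [← hQval, hQzero, map_zero]
      have h5 : algebraMap (Algebra.adjoin k (Set.range y)) D (P.coeff 0) = 0 := by
        rw [← ha0]; exact ha00
      rw [Subalgebra.algebraMap_eq] at h5
      exact Subtype.coe_injective h5
  -- assemble the family
  have hopt : AlgebraicIndependent k fun o : Option (Fin t) => o.elim x y :=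
    (hy.option_iff_transcendental x).mpr htr
  refine ⟨fun j => Fin.cases x y j, ?_⟩
  have hfe : (fun o : Option (Fin t) => o.elim x y) ∘ (finSuccEquiv t) = fun j => Fin.cases x y j := by
    funext j
    induction j using Fin.cases with
    | zero => simp
    | succ i => simp
  exact (algebraicIndependent_equiv' (finSuccEquiv t) hfe).mpr hopt

theorem krullDim_le_of_chains {α β : Type*} [Preorder α] [Preorder β]
    (H : ∀ c : LTSeries α, ∃ d : LTSeries β, d.length = c.length) :
    Order.krullDim α ≤ Order.krullDim β := by
  unfold Order.krullDim
  apply iSup_le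
  intro c
  obtain ⟨d, hd⟩ := H c
  rw [← hd]
  exact le_iSup (fun p : LTSeries β => (p.length : WithBot ℕ∞)) d

universe u v

theorem exists_indep_of_chain (k : Type v) [Field k] :
    ∀ (m : ℕ) (B : Type u) [CommRing B] [IsDomain B] [Algebra k B]
      (q : Fin (m + 1) → PrimeSpectrum B), StrictMono q →
      ∃ y : Fin m → B, AlgebraicIndependent k y := by
  intro m
  induction m with
  | zero =>
    intro B _ _ _ _ _
    refine ⟨fun i => i.elim0, ?_⟩
    rw [algebraicIndependent_empty_type_iff]
    exact (algebraMap k B).injective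
  | succ m IH =>
    intro B _ _ _ q hq
    set I : Ideal B := (q 1).asIdeal with hI
    have hker : RingHom.ker (Ideal.Quotient.mk I) = I := Ideal.mk_ker
    have hIne : I ≠ ⊥ := by
      intro h
      have h01 : (q 0).asIdeal < I := (PrimeSpectrum.asIdeal_lt_asIdeal _ _).mpr (hq (by
        show (0 : Fin (m+2)) < 1
        exact Fin.lt_iff_val_lt_val.mpr (by simp)))
      rw [h] at h01
      exact (not_lt_bot h01)
    have hle : ∀ i : Fin (m + 1), I ≤ (q i.succ).asIdeal := by
      intro i
      refine (PrimeSpectrum.asIdeal_le_asIdeal _ _).mpr (hq.monotone ?_)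
      show (1 : Fin (m+2)) ≤ i.succ
      rw [Fin.le_iff_val_le_val, show ((1 : Fin (m+2)) : ℕ) = 1 from rfl, Fin.val_succ]
      omega
    -- quotient chain
    have hprime : ∀ i : Fin (m + 1), (Ideal.map (Ideal.Quotient.mk I) (q i.succ).asIdeal).IsPrime :=
      fun i => Ideal.map_isPrime_of_surjective Ideal.Quotient.mk_surjective (by rw [hker]; exact hle i)
    set q' : Fin (m + 1) → PrimeSpectrum (B ⧸ I) :=
      fun i => ⟨Ideal.map (Ideal.Quotient.mk I) (q i.succ).asIdeal, hprime i⟩ with hq'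
    have hq'mono : StrictMono q' := by
      intro i j hij
      rw [← PrimeSpectrum.asIdeal_lt_asIdeal]
      have hlt : (q i.succ).asIdeal < (q j.succ).asIdeal :=
        (PrimeSpectrum.asIdeal_lt_asIdeal _ _).mpr (hq (Fin.succ_lt_succ_iff.mpr hij))
      refine lt_of_le_of_ne (Ideal.map_mono hlt.le) ?_
      intro heq
      have hcomap := congrArg (Ideal.comap (Ideal.Quotient.mk I)) heq
      rw [Ideal.comap_map_of_surjective _ Ideal.Quotient.mk_surjective,
        Ideal.comap_map_of_surjective _ Ideal.Quotient.mk_surjective] at hcomap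
      have hker' : Ideal.comap (Ideal.Quotient.mk I) ⊥ = I := by
        rw [← RingHom.ker_eq_comap_bot]; exact hker
      rw [hker', sup_eq_left.mpr (hle i), sup_eq_left.mpr (hle j)] at hcomap
      exact hlt.ne hcomap
    obtain ⟨w, hw⟩ := IH (B ⧸ I) q' hq'mono
    choose y' hy' using fun i => Ideal.Quotient.mk_surjective (I := I) (w i)
    have hcomp : AlgebraicIndependent k (⇑(Ideal.Quotient.mkₐ k I) ∘ y') := by
      convert hw using 1
      funext i
      exact hy' i
    exact exists_succ_indep_of_ker_ne_bot (Ideal.Quotient.mkₐ k I) (by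
      rw [show ((Ideal.Quotient.mkₐ k I : B →ₐ[k] B ⧸ I) : B →+* B ⧸ I) = Ideal.Quotient.mk I from rfl, hker]
      exact hIne) hcomp



set_option maxHeartbeats 2000000 in
theorem exists_chain_of_indep (k : Type v) [Field k] :
    ∀ (m : ℕ) (B : Type u) [CommRing B] [IsDomain B] [Algebra k B] [Algebra.FiniteType k B]
      (y : Fin m → B), AlgebraicIndependent k y →
      ∃ c : LTSeries (PrimeSpectrum B), c.length = m := by
  intro m
  induction m with
  | zero =>
    intro B _ _ _ _ _ _
    obtain ⟨Mx, hMx⟩ := Ideal.exists_maximal B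
    exact ⟨RelSeries.singleton _ ⟨Mx, hMx.isPrime⟩, rfl⟩
  | succ m IH =>
    intro B _ _ _ _ y hy
    classical
    set ys : Fin m → B := y ∘ Fin.succ with hys_def
    have hys : AlgebraicIndependent k ys := hy.comp Fin.succ (Fin.succ_injective m)
    have hy' : AlgebraicIndependent k (fun j : Fin (m+1) => Fin.cases (motive := fun _ => B) (y 0) ys j) := by
      convert hy using 1
      funext j
      induction j using Fin.cases with
      | zero => simp
      | succ i => simp [hys_def]
    have hopt : AlgebraicIndependent k (fun o : Option (Fin m) => o.elim (y 0) ys) := by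
      have hfe : (fun o : Option (Fin m) => o.elim (y 0) ys) ∘ (finSuccEquiv m)
          = fun j : Fin (m+1) => Fin.cases (motive := fun _ => B) (y 0) ys j := by
        funext j
        induction j using Fin.cases with
        | zero => simp
        | succ i => simp
      exact (algebraicIndependent_equiv' (finSuccEquiv m) hfe).mp hy'
    have htr : Transcendental (Algebra.adjoin k (Set.range ys)) (y 0) :=
      (hys.option_iff_transcendental (y 0)).mp hopt
    set A0 : Subalgebra k B := Algebra.adjoin k (Set.range ys) with hA0
    set W : Submonoid B :=
      { carrier := {b | b ∈ A0 ∧ b ≠ 0}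
        one_mem' := ⟨A0.one_mem, one_ne_zero⟩
        mul_mem' := fun ha hb => ⟨A0.mul_mem ha.1 hb.1, mul_ne_zero ha.2 hb.2⟩ } with hW
    have hWle : W ≤ nonZeroDivisors B := fun w hw => mem_nonZeroDivisors_of_ne_zero hw.2
    letI : IsDomain (Localization W) := IsLocalization.isDomain_localization hWle
    set L := Localization W with hL
    set π : B →+* L := algebraMap B L with hπ
    have hπinj : Function.Injective π := IsLocalization.injective L hWle
    have haev : ∀ Q : MvPolynomial (Fin m) k, Q ≠ 0 → MvPolynomial.aeval ys Q ∈ W := by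
      intro Q hQ0
      constructor
      · rw [hA0, Algebra.adjoin_range_eq_range_aeval]
        exact ⟨Q, rfl⟩
      · intro h0
        exact hQ0 (hys.eq_zero_of_aeval_eq_zero Q h0)
    -- L is not a field
    have hnf : ¬ IsField L := by
      intro hfield
      letI : Field L := hfield.toField
      set P := MvPolynomial (Fin m) k with hP
      set φ : P →+* L := π.comp (MvPolynomial.aeval ys : P →ₐ[k] B).toRingHom with hφ
      have hunits : ∀ w : nonZeroDivisors P, IsUnit (φ w) := by
        rintro ⟨w, hw⟩
        have hw0 : w ≠ 0 := nonZeroDivisors.ne_zero hw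
        exact IsLocalization.map_units L (⟨_, haev w hw0⟩ : W)
      set K := FractionRing P with hK
      set ρ : K →+* L := IsLocalization.lift (M := nonZeroDivisors P) hunits with hρ
      letI : Algebra K L := ρ.toAlgebra
      letI : Algebra P L := φ.toAlgebra
      letI : IsScalarTower P K L :=
        IsScalarTower.of_algebraMap_eq (fun p => (IsLocalization.lift_eq hunits p).symm)
      have hkKL : ∀ c : k, algebraMap k L c = ρ (algebraMap k K c) := by
        intro c
        have h1 : algebraMap k K c = algebraMap P K (MvPolynomial.C c) := by
          rw [IsScalarTower.algebraMap_apply k P K, MvPolynomial.algebraMap_eq]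
        rw [h1, IsLocalization.lift_eq hunits]
        show algebraMap k L c = φ (MvPolynomial.C c)
        rw [hφ]
        show algebraMap k L c = π (MvPolynomial.aeval ys (MvPolynomial.C c))
        rw [MvPolynomial.aeval_C]
        exact IsScalarTower.algebraMap_apply k B L c
      letI : IsScalarTower k K L := IsScalarTower.of_algebraMap_eq hkKL
      obtain ⟨s, hs⟩ := (inferInstance : Algebra.FiniteType k B).out
      have hFT : Algebra.FiniteType K L := by
        refine ⟨⟨s.image π, ?_⟩⟩
        rw [eq_top_iff]
        intro ξ _
        have hb : ∀ b : B, π b ∈ Algebra.adjoin K ((s.image π : Finset L) : Set L) := by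
          intro b
          have hmem : b ∈ Algebra.adjoin k ((s : Finset B) : Set B) := by rw [hs]; trivial
          have himg : π b ∈ (Algebra.adjoin k ((s : Finset B) : Set B)).map
              (IsScalarTower.toAlgHom k B L) := ⟨b, hmem, rfl⟩
          rw [AlgHom.map_adjoin] at himg
          have hsub : Algebra.adjoin k (⇑(IsScalarTower.toAlgHom k B L) '' ↑s)
              ≤ (Algebra.adjoin K ((s.image π : Finset L) : Set L)).restrictScalars k := by
            apply Algebra.adjoin_le
            intro l hl
            apply Algebra.subset_adjoin
            simpa using hl
          exact hsub himg
        obtain ⟨⟨b, w⟩, hbw⟩ := IsLocalization.surj W ξ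
        obtain ⟨Qw, hQw⟩ : ∃ Qw : P, MvPolynomial.aeval ys Qw = (w : B) := by
          have := (w.2.1 : (w : B) ∈ A0)
          rw [hA0, Algebra.adjoin_range_eq_range_aeval] at this
          obtain ⟨Qw, hQw⟩ := this
          exact ⟨Qw, hQw⟩
        set ω : K := algebraMap P K Qw with hω
        have hπw : π (w : B) = algebraMap K L ω := by
          rw [hω]
          show π (w : B) = ρ (algebraMap P K Qw)
          rw [IsLocalization.lift_eq hunits]
          show π (w:B) = φ Qw
          rw [hφ]
          simp only [RingHom.coe_comp, Function.comp_apply, AlgHom.toRingHom_eq_coe,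
            AlgHom.coe_toRingHom]
          rw [hQw]
        have hπw0 : π (w : B) ≠ 0 := by
          intro h
          exact w.2.2 (hπinj (by rw [h, map_zero]))
        have hω0 : ω ≠ 0 := by
          intro h
          rw [h, map_zero] at hπw
          exact hπw0 hπw
        have hωinv : π (w : B) * algebraMap K L (ω⁻¹) = 1 := by
          rw [hπw, ← map_mul, mul_inv_cancel₀ hω0, map_one]
        have hξ : ξ = π b * algebraMap K L (ω⁻¹) := by
          have h2 : ξ * (π (w:B) * algebraMap K L (ω⁻¹)) = π b * algebraMap K L (ω⁻¹) := by
            rw [← mul_assoc, hbw]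
          rwa [hωinv, mul_one] at h2
        rw [hξ]
        exact Subalgebra.mul_mem _ (hb b) (Subalgebra.algebraMap_mem _ _)
      haveI := hFT
      haveI : Module.Finite K L := finite_of_finite_type_of_isJacobsonRing K L
      haveI : Algebra.IsIntegral K L := Algebra.IsIntegral.of_finite K L
      haveI : Algebra.IsAlgebraic K L := Algebra.IsIntegral.isAlgebraic
      have halgP : IsAlgebraic P (π (y 0)) :=
        (IsFractionRing.isAlgebraic_iff P K L).mpr (Algebra.IsAlgebraic.isAlgebraic _)
      obtain ⟨F, hF0, hFev⟩ := halgP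
      have hev2 : Polynomial.eval₂ ((MvPolynomial.aeval ys : P →ₐ[k] B) : P →+* B) (y 0) F = 0 := by
        apply hπinj
        rw [map_zero, Polynomial.hom_eval₂]
        exact hFev
      set e : P ≃ₐ[k] A0 := hys.aevalEquiv with he
      have hGne : F.map (e : P →+* A0) ≠ 0 := by
        intro h
        exact hF0 ((Polynomial.map_injective _ (fun a b hab => e.injective hab)).eq_iff.mp
          (by rw [h, Polynomial.map_zero]))
      have hG : Polynomial.aeval (y 0) (F.map (e : P →+* A0)) = 0 := by
        show Polynomial.eval₂ (algebraMap A0 B) (y 0) (F.map (e : P →+* A0)) = 0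
        rw [Polynomial.eval₂_map]
        have hcomp : (algebraMap A0 B).comp (e : P →+* A0)
            = ((MvPolynomial.aeval ys : P →ₐ[k] B) : P →+* B) :=
          RingHom.ext fun p => hys.algebraMap_aevalEquiv p
        rw [hcomp]
        exact hev2
      exact htr ⟨F.map (e : P →+* A0), hGne, hG⟩
    -- produce the prime
    obtain ⟨pL, hpL0, hpLprime⟩ := (Ring.not_isField_iff_exists_prime).mp hnf
    set qI : Ideal B := Ideal.comap π pL with hqI
    haveI hqIprime : qI.IsPrime := Ideal.IsPrime.comap π
    have hqIne : qI ≠ ⊥ := by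
      obtain ⟨⟨ξ, hξmem⟩, hξ0'⟩ := Submodule.nonzero_mem_of_bot_lt (bot_lt_iff_ne_bot.mpr hpL0)
      have hξ0 : ξ ≠ 0 := fun h => hξ0' (Subtype.ext h)
      obtain ⟨⟨b, w⟩, hbw⟩ := IsLocalization.surj W ξ
      intro h
      have hbq : b ∈ qI := by
        rw [hqI]
        show π b ∈ pL
        rw [← hbw]
        exact Ideal.mul_mem_right _ _ hξmem
      rw [h, Ideal.mem_bot] at hbq
      rw [hbq, map_zero] at hbw
      rcases mul_eq_zero.mp hbw with h' | h'
      · exact hξ0 h'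
      · exact w.2.2 (hπinj (by rw [h', map_zero]))
    have hysq : AlgebraicIndependent k (⇑(Ideal.Quotient.mkₐ k qI) ∘ ys) := by
      rw [algebraicIndependent_iff]
      intro Q hQ
      by_contra hQ0
      have haQ : MvPolynomial.aeval ys Q ∈ qI := by
        rw [← Ideal.Quotient.eq_zero_iff_mem]
        have : (Ideal.Quotient.mkₐ k qI) (MvPolynomial.aeval ys Q)
            = MvPolynomial.aeval (⇑(Ideal.Quotient.mkₐ k qI) ∘ ys) Q :=
          MvPolynomial.comp_aeval_apply (f := ys) (Ideal.Quotient.mkₐ k qI) Q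
        rw [show Ideal.Quotient.mk qI (MvPolynomial.aeval ys Q)
            = (Ideal.Quotient.mkₐ k qI) (MvPolynomial.aeval ys Q) from rfl, this, hQ]
      have hu : IsUnit (π (MvPolynomial.aeval ys Q)) :=
        IsLocalization.map_units L (⟨_, haev Q hQ0⟩ : W)
      exact hpLprime.ne_top (Ideal.eq_top_of_isUnit_mem _ haQ hu)
    letI : Algebra.FiniteType k (B ⧸ qI) :=
      Algebra.FiniteType.of_surjective (Ideal.Quotient.mkₐ k qI)
        (Ideal.Quotient.mkₐ_surjective k qI)
    obtain ⟨c', hc'⟩ := IH (B ⧸ qI) (⇑(Ideal.Quotient.mkₐ k qI) ∘ ys) hysq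
    have hcm : StrictMono (PrimeSpectrum.comap (Ideal.Quotient.mk qI)) :=
      Monotone.strictMono_of_injective
        (fun a b hab => by
          rw [← PrimeSpectrum.asIdeal_le_asIdeal] at hab ⊢
          exact Ideal.comap_mono hab)
        (PrimeSpectrum.comap_injective_of_surjective _ Ideal.Quotient.mk_surjective)
    set c2 := c'.map _ hcm with hc2
    have hhead : (⟨⊥, Ideal.bot_prime⟩ : PrimeSpectrum B) < c2.head := by
      rw [← PrimeSpectrum.asIdeal_lt_asIdeal]
      refine lt_of_lt_of_le (bot_lt_iff_ne_bot.mpr hqIne) ?_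
      intro a ha
      show Ideal.Quotient.mk qI a ∈ (c'.head).asIdeal
      rw [Ideal.Quotient.eq_zero_iff_mem.mpr ha]
      exact zero_mem _
    refine ⟨c2.cons _ hhead, ?_⟩
    simp [hc2, hc']

/-- Let `R` be an algebra of finite type over a field `k` and `M` a finitely
generated `R`-module. Let `𝔭` be an associated prime of `M` with `dim (R/𝔭) = dim_R M`, and
let `f ∈ R` with `f ∉ 𝔭` and `f ∈ 𝔮` for every associated prime `𝔮 ≠ 𝔭` of `M`. Then
`dim_R M = dim_{R_f} M_f`. -/
theorem krullDim_module_eq_krullDim_away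
    (k R M : Type*) [Field k] [CommRing R] [Algebra k R] [Algebra.FiniteType k R]
    [AddCommGroup M] [Module R M] [Module.Finite R M]
    (p : Ideal R) (hp : p ∈ associatedPrimes R M)
    (hdim : ringKrullDim (R ⧸ p) = ringKrullDim (R ⧸ Module.annihilator R M))
    (f : R) (hfp : f ∉ p)
    (hf : ∀ q ∈ associatedPrimes R M, q ≠ p → f ∈ q) :
    ringKrullDim (R ⧸ Module.annihilator R M)
      = ringKrullDim ((Localization.Away f) ⧸
          Module.annihilator (Localization.Away f)
            (LocalizedModule (Submonoid.powers f) M)) := by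
  classical
  obtain ⟨hpprime, x, hx⟩ := hp
  haveI := hpprime
  set S : Submonoid R := Submonoid.powers f with hS
  set Rf : Type _ := Localization.Away f with hRf
  set Mf : Type _ := LocalizedModule S M with hMf
  set I : Ideal R := Module.annihilator R M with hI
  set J : Ideal Rf := Module.annihilator Rf Mf with hJ
  have hdisj : Disjoint (S : Set R) (p : Set R) := by
    rw [Set.disjoint_left]
    rintro s ⟨n, rfl⟩ hs
    exact hfp (hpprime.mem_of_pow_mem n hs)
  set pf : Ideal Rf := Ideal.map (algebraMap R Rf) p with hpf
  haveI hpfprime : pf.IsPrime :=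
    IsLocalization.isPrime_of_isPrime_disjoint S Rf p hpprime hdisj
  have hcomap : Ideal.comap (algebraMap R Rf) pf = p :=
    IsLocalization.comap_map_of_isPrime_disjoint S Rf hpprime hdisj
  -- `J ≤ pf`
  have hJpf : J ≤ pf := by
    intro ζ hζ
    obtain ⟨⟨r, s⟩, hrs⟩ := IsLocalization.surj S ζ
    have hz : ζ • (LocalizedModule.mk x (1 : S)) = 0 := Module.mem_annihilator.mp hζ _
    have hz2 : (algebraMap R Rf r) • (LocalizedModule.mk x (1 : S) : Mf) = 0 := by
      rw [← hrs, mul_comm, mul_smul, hz, smul_zero]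
    have hz3 : (LocalizedModule.mk (r • x) (1 * 1) : Mf) = 0 := by
      rw [← Localization.mk_one_eq_algebraMap] at hz2
      rw [← hz2]
      exact (LocalizedModule.mk_smul_mk r x 1 1).symm
    rw [← LocalizedModule.zero_mk (1*1 : S), LocalizedModule.mk_eq] at hz3
    obtain ⟨u, hu⟩ := hz3
    have hux : ((u : R) * r) • x = 0 := by
      have h := hu
      simp only [mul_one, one_smul, smul_zero] at h
      rw [mul_smul, ← Submonoid.smul_def]
      exact h
    have hurp : (u : R) * r ∈ p := by
      rw [hx]
      exact Ideal.le_radical (Submodule.mem_colon_singleton.mpr ((Submodule.mem_bot R).mpr hux))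
    have hrp : r ∈ p := by
      rcases hpprime.mem_or_mem hurp with h | h
      · exact absurd h (Set.disjoint_left.mp hdisj u.2)
      · exact h
    have hunit : IsUnit (algebraMap R Rf (s : R)) := IsLocalization.map_units Rf s
    obtain ⟨v, hv⟩ := hunit
    have hζ' : ζ = algebraMap R Rf r * ↑v⁻¹ := by
      rw [← hrs, ← hv]
      rw [mul_assoc, Units.mul_inv, mul_one]
    rw [hζ']
    exact Ideal.mul_mem_right _ _ (Ideal.mem_map_of_mem _ hrp)
  -- `I` maps into `J`
  have hIJ : ∀ a ∈ I, algebraMap R Rf a ∈ J := by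
    intro a ha
    rw [hJ]
    rw [Module.mem_annihilator]
    intro v
    induction v using LocalizedModule.induction_on with
    | _ z t =>
      rw [← Localization.mk_one_eq_algebraMap, LocalizedModule.mk_smul_mk]
      have : a • z = 0 := Module.mem_annihilator.mp ha z
      rw [this, LocalizedModule.zero_mk]
  -- strict monos
  have hmq : ∀ (A : Type _) [CommRing A] (q : Ideal A),
      StrictMono (PrimeSpectrum.comap (Ideal.Quotient.mk q)) := by
    intro A _ q
    exact Monotone.strictMono_of_injective
      (fun a b hab => by
        rw [← PrimeSpectrum.asIdeal_le_asIdeal] at hab ⊢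
        exact Ideal.comap_mono hab)
      (PrimeSpectrum.comap_injective_of_surjective _ Ideal.Quotient.mk_surjective)
  have hml : StrictMono (PrimeSpectrum.comap (algebraMap R Rf)) :=
    Monotone.strictMono_of_injective
      (fun a b hab => by
        rw [← PrimeSpectrum.asIdeal_le_asIdeal] at hab ⊢
        exact Ideal.comap_mono hab)
      (PrimeSpectrum.localization_comap_injective Rf S)
  -- quotient-lift strict mono: primes above an ideal map to primes of the quotient
  have hqm : ∀ (A : Type _) [CommRing A] (q : Ideal A),
      StrictMono (fun P : {P : PrimeSpectrum A // q ≤ P.asIdeal} =>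
        (⟨Ideal.map (Ideal.Quotient.mk q) P.1.asIdeal,
          Ideal.map_isPrime_of_surjective Ideal.Quotient.mk_surjective
            (by rw [Ideal.mk_ker]; exact P.2)⟩ : PrimeSpectrum (A ⧸ q))) := by
    intro A _ q P P' hPP'
    rw [← PrimeSpectrum.asIdeal_lt_asIdeal]
    have hlt : P.1.asIdeal < P'.1.asIdeal := by
      rw [PrimeSpectrum.asIdeal_lt_asIdeal]
      exact hPP'
    refine lt_of_le_of_ne (Ideal.map_mono hlt.le) ?_
    intro heq
    have hcm := congrArg (Ideal.comap (Ideal.Quotient.mk q)) heq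
    rw [Ideal.comap_map_of_surjective _ Ideal.Quotient.mk_surjective,
      Ideal.comap_map_of_surjective _ Ideal.Quotient.mk_surjective] at hcm
    have hker' : Ideal.comap (Ideal.Quotient.mk q) ⊥ = q := by
      rw [← RingHom.ker_eq_comap_bot, Ideal.mk_ker]
    rw [hker', sup_eq_left.mpr P.2, sup_eq_left.mpr P'.2] at hcm
    exact hlt.ne hcm
  -- Inequality 1 : dim (Rf/J) ≤ dim (R/I)
  have hle1 : ringKrullDim (Rf ⧸ J) ≤ ringKrullDim (R ⧸ I) := by
    apply krullDim_le_of_chains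
    intro c
    set c1 := (c.map _ (hmq Rf J)).map _ hml with hc1
    have hcont : ∀ i : Fin (c1.length + 1), I ≤ (c1 i).asIdeal := by
      intro i a ha
      have e1 : c1 i = PrimeSpectrum.comap (algebraMap R Rf) ((c.map _ (hmq Rf J)) i) := rfl
      rw [e1, PrimeSpectrum.comap_asIdeal, Ideal.mem_comap]
      have e2 : (c.map _ (hmq Rf J)) i = PrimeSpectrum.comap (Ideal.Quotient.mk J) (c i) := rfl
      rw [e2, PrimeSpectrum.comap_asIdeal, Ideal.mem_comap]
      have h2 : (Ideal.Quotient.mk J) (algebraMap R Rf a) = 0 :=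
        Ideal.Quotient.eq_zero_iff_mem.mpr (hIJ a ha)
      rw [h2]
      exact zero_mem _
    set c2 : LTSeries {P : PrimeSpectrum R // I ≤ P.asIdeal} :=
      ⟨c1.length, fun i => ⟨c1 i, hcont i⟩, fun i => by
        show (⟨c1 i.castSucc, _⟩ : {P : PrimeSpectrum R // I ≤ P.asIdeal}) < ⟨c1 i.succ, _⟩
        rw [Subtype.mk_lt_mk]
        exact c1.step i⟩ with hc2
    exact ⟨c2.map _ (hqm R I), rfl⟩
  -- Inequality 2 : dim (R/p) ≤ dim (Rf/J)
  have hle2 : ringKrullDim (R ⧸ p) ≤ ringKrullDim (Rf ⧸ J) := by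
    apply krullDim_le_of_chains
    intro c
    -- independent family in R/p of size c.length
    obtain ⟨y, hy⟩ := exists_indep_of_chain k c.length (R ⧸ p) c.toFun c.strictMono
    -- push into Rf/pf
    have hle' : p ≤ Ideal.comap (algebraMap R Rf) pf := le_of_eq hcomap.symm
    set θ : (R ⧸ p) →+* (Rf ⧸ pf) := Ideal.quotientMap pf (algebraMap R Rf) hle' with hθ
    have hθinj : Function.Injective θ :=
      Ideal.quotientMap_injective' (le_of_eq hcomap)
    have hcompat : (algebraMap k (Rf ⧸ pf)).comp (RingHom.id k)
        = (θ : (R ⧸ p) →+* (Rf ⧸ pf)).comp (algebraMap k (R ⧸ p)) := by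
      ext c'
      show algebraMap k (Rf ⧸ pf) c' = θ (algebraMap k (R ⧸ p) c')
      rw [IsScalarTower.algebraMap_apply k R (R ⧸ p),
        IsScalarTower.algebraMap_apply k Rf (Rf ⧸ pf),
        IsScalarTower.algebraMap_apply k R Rf]
      rw [show algebraMap R (R ⧸ p) = Ideal.Quotient.mk p from rfl,
        show algebraMap Rf (Rf ⧸ pf) = Ideal.Quotient.mk pf from rfl]
      exact Ideal.quotientMap_mk.symm
    have hyθ : AlgebraicIndependent k (⇑θ ∘ y) :=
      hy.ringHom_of_comp_eq (RingHom.id k) θ Function.surjective_id hθinj hcompat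
    -- Rf/pf is a finitely generated domain over k
    haveI : Algebra.FiniteType R Rf :=
      IsLocalization.finiteType_of_monoid_fg S Rf
    haveI : Algebra.FiniteType k Rf := Algebra.FiniteType.trans ‹Algebra.FiniteType k R› ‹_›
    haveI : Algebra.FiniteType k (Rf ⧸ pf) :=
      Algebra.FiniteType.of_surjective (Ideal.Quotient.mkₐ k pf)
        (Ideal.Quotient.mkₐ_surjective k pf)
    obtain ⟨c', hc'⟩ := exists_chain_of_indep k c.length (Rf ⧸ pf) (⇑θ ∘ y) hyθ
    -- map back to Spec (Rf/J)
    set c1 := c'.map _ (hmq Rf pf) with hc1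
    have hcont : ∀ i : Fin (c1.length + 1), J ≤ (c1 i).asIdeal := by
      intro i a ha
      have e1 : c1 i = PrimeSpectrum.comap (Ideal.Quotient.mk pf) (c' i) := rfl
      rw [e1, PrimeSpectrum.comap_asIdeal, Ideal.mem_comap]
      have h2 : (Ideal.Quotient.mk pf) a = 0 := Ideal.Quotient.eq_zero_iff_mem.mpr (hJpf ha)
      rw [h2]
      exact zero_mem _
    set c2 : LTSeries {P : PrimeSpectrum Rf // J ≤ P.asIdeal} :=
      ⟨c1.length, fun i => ⟨c1 i, hcont i⟩, fun i => by
        show (⟨c1 i.castSucc, _⟩ : {P : PrimeSpectrum Rf // J ≤ P.asIdeal}) < ⟨c1 i.succ, _⟩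
        rw [Subtype.mk_lt_mk]
        exact c1.step i⟩ with hc2
    refine ⟨c2.map _ (hqm Rf J), ?_⟩
    show c1.length = c.length
    rw [hc1]
    show c'.length = c.length
    exact hc'
  -- combine
  refine le_antisymm ?_ ?_
  · rw [← hdim]
    exact hle2
  · exact hle1
end

section
/- Let 𝒯 be a ℤ/m-graded triangulated category (1 ≤ m ≤ ∞), R a commutative ring acting centrally on 𝒯, X an object, and M = Hom^•(X, X). If a_1, …, a_n ∈ R is an M-regular sequence, then there is an isomorphism of R-modules Hom^•(X⫽(a_1, …, a_n), X) ≅ M/(a_1, …, a_n)M (in the graded sense, Hom^•(X⫽(a_1, …, a_n), X) ≅ (M/(a_1, …, a_n)M)[−n]). -/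
open CategoryTheory Category Limits Pretriangulated DirectSum

universe v u

namespace RouquierDim

variable {C : Type u} [Category.{v} C] [Preadditive C] [HasZeroObject C]
  [HasShift C ℤ] [∀ n : ℤ, (shiftFunctor C n).Additive] [Pretriangulated C]
  [HasBinaryBiproducts C]

/-- `G` is a split-generator of the triangulated category `C`:
`C = ⟨G⟩_n` for some `n ∈ ℕ`. -/
def IsSplitGenerator (G : C) : Prop := ∃ n : ℕ, angleN {G} n = Set.univ

/-- A central action of a commutative ring `R` on the (`ℤ/m`-graded) triangulated
category `C`: a ring homomorphism `φ K : R →+* End K` for every object `K`, natural in `K`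
and compatible with the shift. -/
structure CentralAction (R : Type*) [CommRing R] where
  φ : ∀ K : C, R →+* End K
  natural : ∀ {K L : C} (f : K ⟶ L) (r : R), φ K r ≫ f = f ≫ φ L r
  shift_comm : ∀ (K : C) (r : R) (n : ℤ), φ (K⟦n⟧) r = (φ K r)⟦n⟧'

variable {R : Type*} [CommRing R]

/-- The `R`-module structure on `Hom(X, Y)` induced by a central action:
`r • f = f ≫ φ Y r` (equivalently, `φ X r ≫ f`, by naturality). -/
def CentralAction.homModule (A : CentralAction (C := C) R) (X Y : C) :
    Module R (X ⟶ Y) :=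
  Module.compHom (X ⟶ Y) (A.φ Y)

/-- `Hom^•(X, Y) = ⊕_{i ∈ ℤ/m} Hom(X, Σ^i Y)` as an `R`-module, for the `ℤ/m`-graded
triangulated category `C` (`m = 0` encodes `m = ∞`, in which case `ℤ/m = ℤ`), packaged
as an object of `ModuleCat R`. -/
noncomputable def CentralAction.HomBullet (A : CentralAction (C := C) R) (m : ℕ)
    (X Y : C) : ModuleCat R :=
  letI : ∀ i : ZMod m, Module R (X ⟶ Y⟦(ZMod.cast i : ℤ)⟧) := fun _ => A.homModule _ _
  ModuleCat.of R (⨁ i : ZMod m, (X ⟶ Y⟦(ZMod.cast i : ℤ)⟧))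

/-- `K` is a Koszul object `X ⫽ r` of `r : R` on `X`: there is a distinguished triangle
`X ⟶ X ⟶ K ⟶ X⟦1⟧` whose first map is `φ X r`. -/
def CentralAction.IsKoszulObject (A : CentralAction (C := C) R) (r : R) (X K : C) : Prop :=
  ∃ (g : X ⟶ K) (h : K ⟶ X⟦(1 : ℤ)⟧),
    Triangle.mk (A.φ X r : X ⟶ X) g h ∈ (distTriang C)

/-- `K` is an iterated Koszul object `X ⫽ (r_1, …, r_n)`:
`X ⫽ (r_1, …, r_n) = (X ⫽ r_1) ⫽ (r_2, …, r_n)` (equivalently,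
`X ⫽ (r_1, …, r_n) = (X ⫽ (r_1, …, r_{n-1})) ⫽ r_n`). -/
inductive CentralAction.IsIterKoszulObject (A : CentralAction (C := C) R) :
    C → List R → C → Prop
  | nil (X : C) : CentralAction.IsIterKoszulObject A X [] X
  | cons {X Y K : C} {r : R} {rs : List R} (h₁ : A.IsKoszulObject r X Y)
      (h₂ : CentralAction.IsIterKoszulObject A Y rs K) :
      CentralAction.IsIterKoszulObject A X (r :: rs) K

open Pointwise in
lemma mem_pointwise_smul_top_iff {M : Type*} [AddCommGroup M]
    [Module R M] (r : R) (x : M) :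
    x ∈ r • (⊤ : Submodule R M) ↔ ∃ y, r • y = x := by
  show x ∈ Submodule.map (DistribMulAction.toLinearMap R M r) ⊤ ↔ _
  rw [Submodule.mem_map]
  simp
  exact Iff.rfl

lemma shiftIsoOfDvd (m : ℕ) (hgr : Nonempty (shiftFunctor C (m : ℤ) ≅ 𝟭 C))
    (Z : C) (a b : ℤ) (hab : (m : ℤ) ∣ b - a) : Nonempty (Z⟦a⟧ ≅ Z⟦b⟧) := by
  obtain ⟨e⟩ := hgr
  have step : ∀ n : ℤ, Nonempty (Z⟦n + (m : ℤ)⟧ ≅ Z⟦n⟧) := fun n =>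
    ⟨(shiftFunctorAdd C n (m : ℤ)).app Z ≪≫ e.app (Z⟦n⟧)⟩
  have key : ∀ (k : ℕ) (n : ℤ), Nonempty (Z⟦n + (m : ℤ) * k⟧ ≅ Z⟦n⟧) := by
    intro k
    induction k with
    | zero => exact fun n => ⟨eqToIso (by norm_num)⟩
    | succ k ih =>
      intro n
      obtain ⟨e1⟩ := step (n + (m : ℤ) * k)
      obtain ⟨e2⟩ := ih n
      exact ⟨eqToIso (by push_cast; ring_nf) ≪≫ e1 ≪≫ e2⟩
  obtain ⟨c, hc⟩ := hab
  have hb : b = a + (m : ℤ) * c := by omega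
  rcases le_or_gt 0 c with hcpos | hcneg
  · obtain ⟨k, rfl⟩ := Int.eq_ofNat_of_zero_le hcpos
    obtain ⟨e1⟩ := key k a
    exact ⟨(eqToIso (by rw [hb]) ≪≫ e1).symm.symm.symm⟩
  · obtain ⟨k, hk⟩ : ∃ k : ℕ, -c = (k : ℤ) := Int.eq_ofNat_of_zero_le (by omega)
    obtain ⟨e1⟩ := key k b
    have ha : a = b + (m : ℤ) * k := by rw [hb, ← hk]; ring
    exact ⟨eqToIso (by rw [ha]) ≪≫ e1⟩

open Pointwise in
lemma step (A : CentralAction (C := C) R) (m : ℕ)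
    (hgr : Nonempty (shiftFunctor C (m : ℤ) ≅ 𝟭 C)) (X : C) {W Y : C} {r : R}
    (hK : A.IsKoszulObject r W Y)
    (hr : IsSMulRegular (A.HomBullet m W X) r) :
    Nonempty ((A.HomBullet m Y X) ≃ₗ[R]
      ((A.HomBullet m W X) ⧸ (r • (⊤ : Submodule R (A.HomBullet m W X))))) := by
  classical
  obtain ⟨g, h, hT⟩ := hK
  letI instH : ∀ (K : C) (i : ZMod m), Module R (K ⟶ X⟦(ZMod.cast i : ℤ)⟧) :=
    fun K _ => A.homModule K _
  -- the permutation i ↦ i + 1 of ZMod m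
  let σ : ZMod m ≃ ZMod m :=
    ⟨fun i => i + 1, fun i => i - 1, fun i => by show i + 1 - 1 = i; ring,
      fun i => by show i - 1 + 1 = i; ring⟩
  have hσ : ∀ i : ZMod m, σ.symm i + 1 = i := fun i => by show i - 1 + 1 = i; ring
  -- choice of isomorphisms X⟦cast (i-1)⟧⟦1⟧ ≅ X⟦cast i⟧
  have hu : ∀ i : ZMod m,
      Nonempty ((X⟦(ZMod.cast (σ.symm i) : ℤ)⟧)⟦(1 : ℤ)⟧ ≅ X⟦(ZMod.cast i : ℤ)⟧) := by
    intro i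
    have hdvd : (m : ℤ) ∣ (ZMod.cast i : ℤ) - ((ZMod.cast (σ.symm i) : ℤ) + 1) := by
      have h0 : (((ZMod.cast i : ℤ) - ((ZMod.cast (σ.symm i) : ℤ) + 1) : ℤ) : ZMod m) = 0 := by
        push_cast [ZMod.intCast_zmod_cast]
        rw [hσ i, sub_self]
      exact (CharP.intCast_eq_zero_iff (ZMod m) m _).mp h0
    obtain ⟨e₁⟩ := shiftIsoOfDvd (C := C) m hgr X ((ZMod.cast (σ.symm i) : ℤ) + 1)
      (ZMod.cast i : ℤ) hdvd
    exact ⟨(shiftFunctorAdd C (ZMod.cast (σ.symm i) : ℤ) (1 : ℤ)).symm.app X ≪≫ e₁⟩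
  let u : ∀ i : ZMod m, (X⟦(ZMod.cast (σ.symm i) : ℤ)⟧)⟦(1 : ℤ)⟧ ≅ X⟦(ZMod.cast i : ℤ)⟧ :=
    fun i => (hu i).some
  -- the component linear maps
  let ψ : ∀ i : ZMod m, (W ⟶ X⟦(ZMod.cast (σ.symm i) : ℤ)⟧) →ₗ[R] (Y ⟶ X⟦(ZMod.cast i : ℤ)⟧) :=
    fun i =>
      { toFun := fun f => h ≫ f⟦(1 : ℤ)⟧' ≫ (u i).hom
        map_add' := fun f f' => by
          rw [Functor.map_add, Preadditive.add_comp, Preadditive.comp_add]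
        map_smul' := fun s f => by
          show h ≫ (f ≫ A.φ _ s)⟦(1 : ℤ)⟧' ≫ (u i).hom
            = (h ≫ f⟦(1 : ℤ)⟧' ≫ (u i).hom) ≫ A.φ _ s
          rw [Functor.map_comp, ← A.shift_comm]
          simp only [Category.assoc, A.natural] }
  let MW := ⨁ i : ZMod m, (W ⟶ X⟦(ZMod.cast i : ℤ)⟧)
  let MY := ⨁ i : ZMod m, (Y ⟶ X⟦(ZMod.cast i : ℤ)⟧)
  let ρ : MW ≃ₗ[R] ⨁ i : ZMod m, (W ⟶ X⟦(ZMod.cast (σ.symm i) : ℤ)⟧) :=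
    DirectSum.lequivCongrLeft R σ
  let Φ : MW →ₗ[R] MY := (DFinsupp.mapRange.linearMap ψ).comp ρ.toLinearMap
  have hmr : ∀ (z : Π₀ i : ZMod m, (W ⟶ X⟦(ZMod.cast (σ.symm i) : ℤ)⟧)) (i : ZMod m),
      (DFinsupp.mapRange.linearMap ψ) z i = ψ i (z i) := fun z i =>
    DFinsupp.mapRange_apply (fun j x => ψ j x) (fun j => (ψ j).map_zero) z i
  -- componentwise regularity
  have hrcomp : ∀ (i : ZMod m) (f : W ⟶ X⟦(ZMod.cast i : ℤ)⟧), r • f = 0 → f = 0 := by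
    intro i f hf
    have h3 : DirectSum.lof R (ZMod m) (fun j => (W ⟶ X⟦(ZMod.cast j : ℤ)⟧)) i f = 0 :=
      hr (show r • DirectSum.lof R (ZMod m) (fun j => (W ⟶ X⟦(ZMod.cast j : ℤ)⟧)) i f
            = r • (0 : MW) by rw [smul_zero, ← map_smul, hf, map_zero])
    have h4 := congrArg (fun z : MW => z i) h3
    simpa using h4
  -- surjectivity of the components
  have hψsurj : ∀ (i : ZMod m) (t : Y ⟶ X⟦(ZMod.cast i : ℤ)⟧), ∃ f, ψ i f = t := by
    intro i t
    have h12 : A.φ W r ≫ g = 0 := comp_distTriang_mor_zero₁₂ _ hT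
    have hgt : g ≫ t = 0 := by
      apply hrcomp i
      show (g ≫ t) ≫ A.φ _ r = 0
      rw [← A.natural (g ≫ t) r, ← Category.assoc, h12, zero_comp]
    obtain ⟨q, hq⟩ := Triangle.yoneda_exact₃ _ hT t hgt
    refine ⟨(shiftFunctor C (1 : ℤ)).preimage (q ≫ (u i).inv), ?_⟩
    show h ≫ ((shiftFunctor C (1 : ℤ)).map ((shiftFunctor C (1 : ℤ)).preimage (q ≫ (u i).inv)))
        ≫ (u i).hom = t
    rw [Functor.map_preimage, hq]
    simp
    exact congrArg (fun z => h ≫ z) (by simp : (q ≫ (u i).inv) ≫ (u i).hom = q)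
  -- kernel of the components
  have hψker : ∀ (i : ZMod m) (f : W ⟶ X⟦(ZMod.cast (σ.symm i) : ℤ)⟧),
      ψ i f = 0 → ∃ v, r • v = f := by
    intro i f hf
    have h1 : h ≫ f⟦(1 : ℤ)⟧' = 0 := by
      have h2 : (h ≫ f⟦(1 : ℤ)⟧' ≫ (u i).hom) ≫ (u i).inv = 0 := by
        rw [show h ≫ f⟦(1 : ℤ)⟧' ≫ (u i).hom = 0 from hf, zero_comp]
      simpa using h2
    obtain ⟨q, hq⟩ := Triangle.yoneda_exact₃ _ (rot_of_distTriang _ hT) (f⟦(1 : ℤ)⟧') h1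
    refine ⟨-(shiftFunctor C (1 : ℤ)).preimage q, ?_⟩
    show (-(shiftFunctor C (1 : ℤ)).preimage q) ≫ A.φ _ r = f
    rw [← A.natural]
    apply (shiftFunctor C (1 : ℤ)).map_injective
    rw [Functor.map_comp, Functor.map_neg, Functor.map_preimage]
    refine Eq.trans ?_ hq.symm
    simp [Triangle.rotate]
    exact (Preadditive.comp_neg _ _).trans (Preadditive.neg_comp _ _).symm
  -- r kills the image of the components
  have hψzero : ∀ (i : ZMod m) (f : W ⟶ X⟦(ZMod.cast (σ.symm i) : ℤ)⟧), ψ i (r • f) = 0 := by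
    intro i f
    have hra : (r • f : W ⟶ X⟦(ZMod.cast (σ.symm i) : ℤ)⟧) = A.φ W r ≫ f :=
      (A.natural f r).symm
    have h23 : h ≫ (A.φ W r)⟦(1 : ℤ)⟧' = 0 := by
      have h2 := comp_distTriang_mor_zero₂₃ _ (rot_of_distTriang _ hT)
      simp only [Triangle.rotate, Triangle.mk] at h2
      rw [Preadditive.comp_neg] at h2
      exact neg_eq_zero.mp h2
    show h ≫ (r • f)⟦(1 : ℤ)⟧' ≫ (u i).hom = 0
    rw [hra, Functor.map_comp, ← Category.assoc, ← Category.assoc, h23, zero_comp, zero_comp]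
  -- surjectivity of Φ
  have hΦsurj : Function.Surjective Φ := by
    intro y
    let p : ∀ i : ZMod m, (Y ⟶ X⟦(ZMod.cast i : ℤ)⟧) → (W ⟶ X⟦(ZMod.cast (σ.symm i) : ℤ)⟧) :=
      fun i t => if ht : t = 0 then 0 else (hψsurj i t).choose
    have hp0 : ∀ i, p i 0 = 0 := fun i => dif_pos rfl
    have hp : ∀ i t, ψ i (p i t) = t := by
      intro i t
      by_cases ht : t = 0
      · subst ht; rw [show p i 0 = 0 from hp0 i, map_zero]
      · rw [show p i t = (hψsurj i t).choose from dif_neg ht]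
        exact (hψsurj i t).choose_spec
    refine ⟨ρ.symm (DFinsupp.mapRange p hp0 y), ?_⟩
    show (DFinsupp.mapRange.linearMap ψ) (ρ (ρ.symm (DFinsupp.mapRange p hp0 y))) = y
    rw [LinearEquiv.apply_symm_apply]
    apply DFinsupp.ext
    intro i
    rw [hmr, DFinsupp.mapRange_apply, hp]
  -- kernel of Φ
  have hΦker : LinearMap.ker Φ = r • (⊤ : Submodule R MW) := by
    ext x
    rw [LinearMap.mem_ker, mem_pointwise_smul_top_iff]
    constructor
    · intro hx
      have hx' : ∀ i, ψ i (ρ x i) = 0 := by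
        intro i
        have h5 := congrArg (fun z : MY => z i) hx
        simpa [Φ, LinearMap.comp_apply, hmr] using h5
      let q : ∀ i : ZMod m, (W ⟶ X⟦(ZMod.cast (σ.symm i) : ℤ)⟧) →
          (W ⟶ X⟦(ZMod.cast (σ.symm i) : ℤ)⟧) :=
        fun i t => if t = 0 then 0 else if ht : ∃ v, r • v = t then ht.choose else 0
      have hq0 : ∀ i, q i 0 = 0 := fun i => if_pos rfl
      refine ⟨ρ.symm (DFinsupp.mapRange q hq0 (ρ x)), ?_⟩
      apply ρ.injective
      rw [map_smul, LinearEquiv.apply_symm_apply]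
      apply DFinsupp.ext
      intro i
      rw [DFinsupp.smul_apply, DFinsupp.mapRange_apply]
      by_cases ht : ρ x i = 0
      · rw [ht, show q i 0 = 0 from hq0 i, smul_zero]
      · have hex : ∃ v, r • v = ρ x i := hψker i (ρ x i) (hx' i)
        rw [show q i (ρ x i) = hex.choose from (if_neg ht).trans (dif_pos hex)]
        exact hex.choose_spec
    · rintro ⟨z, rfl⟩
      show (DFinsupp.mapRange.linearMap ψ) (ρ (r • z)) = 0
      rw [map_smul]
      apply DFinsupp.ext
      intro i
      rw [hmr, DFinsupp.smul_apply, hψzero]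
      simp
  exact ⟨((Φ.quotKerEquivOfSurjective hΦsurj).symm ≪≫ₗ
    Submodule.quotEquivOfEq _ _ hΦker)⟩

open Pointwise in
lemma key (A : CentralAction (C := C) R) (m : ℕ)
    (hgr : Nonempty (shiftFunctor C (m : ℤ) ≅ 𝟭 C)) (X : C)
    {as : List R} {W K : C} (hK : A.IsIterKoszulObject W as K) :
    RingTheory.Sequence.IsWeaklyRegular (A.HomBullet m W X) as →
    Nonempty ((A.HomBullet m K X) ≃ₗ[R]
      ((A.HomBullet m W X) ⧸
        (Ideal.ofList as • (⊤ : Submodule R (A.HomBullet m W X))))) := by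
  induction hK with
  | nil W' =>
    intro _
    exact ⟨(Submodule.quotEquivOfEqBot _ (by simp)).symm⟩
  | @cons W' Y' K' r rs h₁ h₂ ih =>
    intro hreg
    rw [RingTheory.Sequence.isWeaklyRegular_cons_iff] at hreg
    obtain ⟨hrm, hrs⟩ := hreg
    obtain ⟨e⟩ := step A m hgr X h₁ hrm
    have hrs' : RingTheory.Sequence.IsWeaklyRegular (A.HomBullet m Y' X) rs :=
      (e.isWeaklyRegular_congr rs).mpr hrs
    obtain ⟨f⟩ := ih hrs'
    refine ⟨f ≪≫ₗ Submodule.Quotient.equiv _ _ e ?_ ≪≫ₗ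
      (Submodule.quotOfListConsSMulTopEquivQuotSMulTopInner (A.HomBullet m W' X) r rs).symm⟩
    have hm : Submodule.map (e.toLinearMap)
        (Ideal.ofList rs • (⊤ : Submodule R (A.HomBullet m Y' X)))
        = Ideal.ofList rs • ⊤ := by
      rw [Submodule.map_smul'', Submodule.map_top]
      congr 1
      exact LinearMap.range_eq_top.mpr e.surjective
    exact hm


/-- Let `C` be a `ℤ/m`-graded triangulated category (`1 ≤ m ≤ ∞`; here
`m = 0` encodes `m = ∞`), `R` a commutative ring acting centrally on `C`, `X` an object and
`M = Hom^•(X, X)`. If `a_1, …, a_n ∈ R` is an `M`-regular sequence, then there is an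
isomorphism of `R`-modules `Hom^•(X ⫽ (a_1, …, a_n), X) ≅ M/(a_1, …, a_n)M`. -/
theorem homBullet_koszul_left
    (A : CentralAction (C := C) R) (m : ℕ)
    (hgr : Nonempty (shiftFunctor C (m : ℤ) ≅ 𝟭 C))
    (X : C) (as : List R)
    (hreg : RingTheory.Sequence.IsRegular (A.HomBullet m X X) as)
    (K : C) (hK : A.IsIterKoszulObject X as K) :
    Nonempty ((A.HomBullet m K X) ≃ₗ[R]
      ((A.HomBullet m X X) ⧸
        (Ideal.ofList as • (⊤ : Submodule R (A.HomBullet m X X))))) := by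
  exact key A m hgr X hK hreg.toIsWeaklyRegular

end RouquierDim
end
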